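/- arXiv:2004.02800 — 7 statements merged into one kernel-verified Lean document; each statement's English description precedes it below -/
import Mathlib

section
/- Let T be a tree on the labelled vertex set {1,…,b} with b ≥ 2, let n ≥ b and 0 < p < 1. Let Φ₁, Φ : {1,…,b} → {1,…,n} be injections that are compatible, meaning that for all x, y in A = Im(Φ₁) ∩ Im(Φ), the pair {Φ₁⁻¹(x), Φ₁⁻¹(y)} is an edge of T if and only if {Φ⁻¹(x), Φ⁻¹(y)} is an edge of T. Suppose |A| = ℓ and the subgraph of T induced by Φ⁻¹(A) is a forest with k connected components (hence with ℓ − k edges). Then, conditional on the event that Φ₁ is an induced order-preserving copy of T (i.e. Φ₁(u)Φ₁(v) is an edge of G_{n,p} iff uv is an edge of T for all u,v), the probability that Φ is an induced order-preserving copy of T equals p^{b-1-(ℓ-k)} · (1-p)^{binom(b-1,2) − binom(ℓ,2) + (ℓ-k)}. -/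
open MeasureTheory Filter

/-- The Erdős–Rényi random graph measure `G(n,p)`: each potential edge (element of
`Sym2 (Fin n)`) is present independently with probability `p`. -/
noncomputable def gnp (n : ℕ) (p : ℝ) : Measure (Sym2 (Fin n) → Bool) :=
  Measure.pi fun _ => (PMF.bernoulli (min (Real.toNNReal p) 1) (min_le_right _ _)).toMeasure

/-- Adjacency in the random graph sample `ω`: distinct vertices joined by a present edge. -/
def gnpAdj {n : ℕ} (ω : Sym2 (Fin n) → Bool) (x y : Fin n) : Prop :=
  x ≠ y ∧ ω s(x, y) = true

/-- `Φ` is an order-preserving induced copy of `T` in the sample `ω`. -/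
def IsOrderedInducedCopy {b n : ℕ} (T : SimpleGraph (Fin b)) (Φ : Fin b → Fin n)
    (ω : Sym2 (Fin n) → Bool) : Prop :=
  ∀ u v : Fin b, gnpAdj ω (Φ u) (Φ v) ↔ T.Adj u v

/-- `Φ` is compatible with `Φ₁`: on the intersection of their images, pulling back by either
injection yields the same edges of `T`. -/
def Compatible {b n : ℕ} (T : SimpleGraph (Fin b)) (Φ₁ Φ : Fin b → Fin n) : Prop :=
  ∀ u v u' v' : Fin b, Φ₁ u = Φ u' → Φ₁ v = Φ v' → (T.Adj u v ↔ T.Adj u' v')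

/- ### Auxiliary graph-theoretic lemmas -/

open SimpleGraph

section GraphAux

variable {V W : Type*}

lemma reach_of_mem_support {G : SimpleGraph V} {u v x : V} (w : G.Walk u v)
    (hx : x ∈ w.support) : G.Reachable u x := by
  induction w with
  | nil => simp at hx; subst hx; rfl
  | cons h p ih =>
    rw [SimpleGraph.Walk.support_cons] at hx
    rcases List.mem_cons.mp hx with h' | h'
    · subst h'; rfl
    · exact (h.reachable).trans (ih h')

lemma reachable_induce_of_walk {G : SimpleGraph V} {s : Set V} {u v : V} (w : G.Walk u v)
    (h : ∀ x ∈ w.support, x ∈ s) (hu : u ∈ s) (hv : v ∈ s) :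
    (G.induce s).Reachable ⟨u, hu⟩ ⟨v, hv⟩ := by
  induction w with
  | nil => rfl
  | @cons a b c hadj p ih =>
    have hb : b ∈ s := h b (by simp)
    have : (G.induce s).Adj ⟨a, hu⟩ ⟨b, hb⟩ := by simpa using hadj
    exact this.reachable.trans (ih (fun x hx => h x (by simp [hx])) hb hv)

lemma isAcyclic_of_embedding {G : SimpleGraph V} {H : SimpleGraph W} (f : G ↪g H)
    (h : H.IsAcyclic) : G.IsAcyclic := by
  intro v c hc
  exact h (c.map f.toHom) (hc.map f.injective)

lemma connected_induce_supp {G : SimpleGraph V} (c : G.ConnectedComponent) :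
    (G.induce c.supp).Connected := by
  rw [connected_iff]
  refine ⟨?_, ?_⟩
  · rintro ⟨u, hu⟩ ⟨v, hv⟩
    have hu' := (ConnectedComponent.mem_supp_iff _ _).mp hu
    have hv' := (ConnectedComponent.mem_supp_iff _ _).mp hv
    have : G.Reachable u v := ConnectedComponent.exact (hu'.trans hv'.symm)
    obtain ⟨w⟩ := this
    exact reachable_induce_of_walk w (fun x hx => by
      rw [ConnectedComponent.mem_supp_iff, ← hu']
      exact (ConnectedComponent.eq.mpr (reach_of_mem_support w hx)).symm) hu hv
  · obtain ⟨v, hv⟩ := c.exists_rep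
    exact ⟨⟨v, by rw [ConnectedComponent.mem_supp_iff]; exact hv⟩⟩

lemma edgeSet_map_eq (f : V ↪ W) (G : SimpleGraph V) :
    (G.map f).edgeSet = Sym2.map f '' G.edgeSet := by
  ext e
  induction e with
  | _ x y =>
    simp only [mem_edgeSet, map_adj, Set.mem_image]
    constructor
    · rintro ⟨u, v, huv, rfl, rfl⟩
      exact ⟨s(u, v), huv, rfl⟩
    · rintro ⟨e', he', hmap⟩
      induction e' with
      | _ u v =>
        rw [Sym2.map_pair_eq, Sym2.eq_iff] at hmap
        rcases hmap with ⟨rfl, rfl⟩ | ⟨rfl, rfl⟩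
        · exact ⟨u, v, he', rfl, rfl⟩
        · exact ⟨v, u, (he' : G.Adj u v).symm, rfl, rfl⟩

lemma ncard_edgeSet_map (f : V ↪ W) (G : SimpleGraph V) :
    (G.map f).edgeSet.ncard = G.edgeSet.ncard := by
  rw [edgeSet_map_eq, Set.ncard_image_of_injective _ (Sym2.map.injective f.injective)]

lemma mk_eq_of_mem_edge {G : SimpleGraph V} {e : Sym2 V} (he : e ∈ G.edgeSet) {x y : V}
    (hx : x ∈ e) (hy : y ∈ e) : G.connectedComponentMk x = G.connectedComponentMk y := by
  induction e with
  | _ a b =>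
    have hab : G.Adj a b := he
    rcases Sym2.mem_iff.mp hx with rfl | rfl <;> rcases Sym2.mem_iff.mp hy with rfl | rfl
    · rfl
    · exact ConnectedComponent.eq.mpr hab.reachable
    · exact ConnectedComponent.eq.mpr hab.symm.reachable
    · rfl

/-- A finite forest with `c` connected components on `v` vertices has `v - c` edges. -/
lemma forest_formula [Fintype V] (G : SimpleGraph V) (hG : G.IsAcyclic) :
    G.edgeSet.ncard + Nat.card G.ConnectedComponent = Fintype.card V := by
  classical
  letI : Fintype G.ConnectedComponent := Fintype.ofFinite _
  set cm : Sym2 V → G.ConnectedComponent := fun e => G.connectedComponentMk e.out.1 with hcm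
  have hverts : Fintype.card V =
      ∑ c : G.ConnectedComponent, (Finset.univ.filter
        (fun v => G.connectedComponentMk v = c)).card := by
    rw [← Finset.card_univ]
    exact Finset.card_eq_sum_card_fiberwise (fun v _ => Finset.mem_univ _)
  have hedges : G.edgeSet.ncard =
      ∑ c : G.ConnectedComponent, (G.edgeFinset.filter (fun e => cm e = c)).card := by
    rw [Set.ncard_eq_toFinset_card']
    rw [show G.edgeSet.toFinset = G.edgeFinset from rfl]
    exact Finset.card_eq_sum_card_fiberwise (fun v _ => Finset.mem_univ _)
  have key : ∀ c : G.ConnectedComponent,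
      (G.edgeFinset.filter (fun e => cm e = c)).card + 1 =
      (Finset.univ.filter (fun v => G.connectedComponentMk v = c)).card := by
    intro c
    have htree : (G.induce c.supp).IsTree :=
      ⟨connected_induce_supp c, isAcyclic_of_embedding (Embedding.induce c.supp) hG⟩
    have hcard := htree.card_edgeFinset
    have hvfib : (Finset.univ.filter (fun v => G.connectedComponentMk v = c)) =
        c.supp.toFinset := by
      ext v; simp [ConnectedComponent.mem_supp_iff]
    have hefib : (G.edgeFinset.filter (fun e => cm e = c)) =
        (G.induce c.supp).edgeFinset.image (Sym2.map Subtype.val) := by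
      ext e
      simp only [Finset.mem_filter, Finset.mem_image, mem_edgeFinset]
      constructor
      · rintro ⟨he, hc⟩
        have hmem : ∀ x ∈ e, x ∈ c.supp := by
          intro x hx
          rw [ConnectedComponent.mem_supp_iff, ← hc]
          exact (mk_eq_of_mem_edge he (Sym2.out_fst_mem e) hx).symm
        induction e with
        | _ a b =>
          have hab : G.Adj a b := he
          refine ⟨s(⟨a, hmem a (Sym2.mem_mk_left a b)⟩, ⟨b, hmem b (Sym2.mem_mk_right a b)⟩),
            ?_, rfl⟩
          simpa using hab
      · rintro ⟨e', he', rfl⟩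
        induction e' with
        | _ a b =>
          have hab : G.Adj a.val b.val := by simpa using he'
          refine ⟨hab, ?_⟩
          have ha := (ConnectedComponent.mem_supp_iff _ _).mp a.2
          have hmem' : Sym2.map Subtype.val s(a, b) ∈ G.edgeSet := by
            rw [Sym2.map_pair_eq]; exact hab
          have hamem : a.val ∈ Sym2.map Subtype.val s(a, b) := by
            rw [Sym2.map_pair_eq]; exact Sym2.mem_mk_left _ _
          exact (mk_eq_of_mem_edge hmem' (Sym2.out_fst_mem _) hamem).trans ha
    rw [hvfib, hefib, Finset.card_image_of_injective _ (Sym2.map.injective Subtype.val_injective)]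
    rw [hcard, Set.toFinset_card]
  rw [hverts, hedges, Nat.card_eq_fintype_card, ← Finset.card_univ, Finset.card_eq_sum_ones,
    ← Finset.sum_add_distrib]
  exact Finset.sum_congr rfl (fun c _ => key c)

end GraphAux

/- ### Cylinder events for `gnp` -/

lemma cyl_eq_pi {n : ℕ} (S : Finset (Sym2 (Fin n))) (f : Sym2 (Fin n) → Bool) :
    {ω : Sym2 (Fin n) → Bool | ∀ e ∈ S, ω e = f e} =
      Set.pi Set.univ (fun e => if e ∈ S then {f e} else Set.univ) := by
  ext ω
  simp only [Set.mem_setOf_eq, Set.mem_pi, Set.mem_univ, forall_true_left]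
  constructor
  · intro h e
    split_ifs with he
    · exact h e he
    · trivial
  · intro h e he
    have := h e
    rw [if_pos he] at this
    exact this

lemma cyl_measurable {n : ℕ} (S : Finset (Sym2 (Fin n))) (f : Sym2 (Fin n) → Bool) :
    MeasurableSet {ω : Sym2 (Fin n) → Bool | ∀ e ∈ S, ω e = f e} := by
  rw [cyl_eq_pi]
  exact MeasurableSet.univ_pi (fun e => by split_ifs <;> simp)

lemma gnp_cyl {n : ℕ} {p : ℝ} (hp0 : 0 < p) (hp1 : p < 1)
    (S : Finset (Sym2 (Fin n))) (f : Sym2 (Fin n) → Bool) :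
    gnp n p {ω | ∀ e ∈ S, ω e = f e} =
      ENNReal.ofReal p ^ (S.filter (fun e => f e = true)).card *
        ENNReal.ofReal (1 - p) ^ (S.filter (fun e => f e = false)).card := by
  classical
  have hq1 : min (Real.toNNReal p) 1 = Real.toNNReal p :=
    min_eq_left (Real.toNNReal_le_one.mpr hp1.le)
  set μB := (PMF.bernoulli (min (Real.toNNReal p) 1) (min_le_right _ _)).toMeasure with hμB
  have h1p : ENNReal.ofReal (1 - p) = 1 - ENNReal.ofReal p := by
    rw [ENNReal.ofReal_sub 1 hp0.le, ENNReal.ofReal_one]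
  have hsingle : ∀ b : Bool, μB {b} =
      if b then ENNReal.ofReal p else ENNReal.ofReal (1 - p) := by
    intro b
    rw [hμB, PMF.toMeasure_apply_singleton _ _ (measurableSet_singleton b),
      PMF.bernoulli_apply, hq1]
    cases b
    · simp [ENNReal.ofReal]
      exact h1p.symm
    · simp [ENNReal.ofReal]
  rw [cyl_eq_pi, gnp, Measure.pi_pi]
  have key : ∀ e : Sym2 (Fin n), μB (if e ∈ S then {f e} else Set.univ) =
      if e ∈ S then (if f e then ENNReal.ofReal p else ENNReal.ofReal (1 - p)) else 1 := by
    intro e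
    by_cases he : e ∈ S
    · rw [if_pos he, if_pos he]; exact hsingle (f e)
    · rw [if_neg he, if_neg he]; exact measure_univ
  simp_rw [← hμB, key]
  have hff : (S.filter (fun e => ¬ f e = true)) = (S.filter (fun e => f e = false)) := by
    apply Finset.filter_congr; intro e _; simp
  rw [Finset.prod_ite_mem, Finset.univ_inter, Finset.prod_ite, Finset.prod_const,
    Finset.prod_const, hff]

/- ### Events as cylinders -/

lemma copy_event_eq {b n : ℕ} (T : SimpleGraph (Fin b)) (Φ : Fin b → Fin n)
    (hΦ : Function.Injective Φ) (g : Sym2 (Fin n) → Bool)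
    (hg : ∀ e, g e = true ↔ e ∈ (T.map (⟨Φ, hΦ⟩ : Fin b ↪ Fin n)).edgeSet) :
    {ω | IsOrderedInducedCopy T Φ ω} =
      {ω : Sym2 (Fin n) → Bool |
        ∀ e ∈ ((⊤ : SimpleGraph (Fin b)).map (⟨Φ, hΦ⟩ : Fin b ↪ Fin n)).edgeSet, ω e = g e} := by
  ext ω
  simp only [Set.mem_setOf_eq]
  constructor
  · intro h e he
    induction e with
    | _ x y =>
      obtain ⟨u, v, huv, hux, hvy⟩ := (map_adj _ _ _ _).mp ((mem_edgeSet _).mp he)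
      have huv' : u ≠ v := huv
      subst hux hvy
      simp only [Function.Embedding.coeFn_mk] at he ⊢
      by_cases hadj : T.Adj u v
      · have : ω s(Φ u, Φ v) = true := ((h u v).mpr hadj).2
        rw [this, Eq.comm, hg]
        exact (mem_edgeSet _).mpr (map_adj_apply.mpr hadj)
      · have h1 : ¬ gnpAdj ω (Φ u) (Φ v) := fun hc => hadj ((h u v).mp hc)
        have hne : Φ u ≠ Φ v := fun hc => huv' (hΦ hc)
        have : ω s(Φ u, Φ v) = false := by
          cases hb : ω s(Φ u, Φ v)
          · rfl
          · exact absurd ⟨hne, hb⟩ h1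
        rw [this, Eq.comm]
        rw [Bool.eq_false_iff]
        intro hc
        exact hadj (map_adj_apply.mp ((mem_edgeSet _).mp ((hg _).mp hc)))
  · intro h u v
    by_cases huv : u = v
    · subst huv
      constructor
      · rintro ⟨hne, -⟩; exact absurd rfl hne
      · intro hadj; exact absurd hadj (T.irrefl)
    · have hne : Φ u ≠ Φ v := fun hc => huv (hΦ hc)
      have he : s(Φ u, Φ v) ∈ ((⊤ : SimpleGraph (Fin b)).map (⟨Φ, hΦ⟩ : Fin b ↪ Fin n)).edgeSet :=
        (mem_edgeSet _).mpr (map_adj_apply.mpr (by simpa using huv))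
      have hω := h _ he
      constructor
      · rintro ⟨-, hb⟩
        exact map_adj_apply.mp ((mem_edgeSet _).mp ((hg _).mp (hω ▸ hb)))
      · intro hadj
        exact ⟨hne, hω.trans ((hg _).mpr ((mem_edgeSet _).mpr (map_adj_apply.mpr hadj)))⟩

lemma cylinder_inter {ι : Type*} (U₁ U₂ : Set ι) (g₁ g₂ g : ι → Bool)
    (h₁ : ∀ e ∈ U₁, g e = g₁ e) (h₂ : ∀ e ∈ U₂, g e = g₂ e) :
    {ω : ι → Bool | ∀ e ∈ U₁, ω e = g₁ e} ∩ {ω | ∀ e ∈ U₂, ω e = g₂ e} =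
      {ω | ∀ e ∈ U₁ ∪ U₂, ω e = g e} := by
  ext ω
  simp only [Set.mem_inter_iff, Set.mem_setOf_eq]
  constructor
  · rintro ⟨ha, hb⟩ e he
    rcases he with he | he
    · rw [ha e he, h₁ e he]
    · rw [hb e he, h₂ e he]
  · intro h
    exact ⟨fun e he => by rw [h e (Or.inl he), h₁ e he],
      fun e he => by rw [h e (Or.inr he), h₂ e he]⟩

theorem statement6 (b n : ℕ) (hb : 2 ≤ b) (hn : b ≤ n)
    (p : ℝ) (hp0 : 0 < p) (hp1 : p < 1)
    (T : SimpleGraph (Fin b)) (hT : T.IsTree)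
    (Φ₁ Φ : Fin b → Fin n) (hΦ₁ : Function.Injective Φ₁) (hΦ : Function.Injective Φ)
    (hcomp : Compatible T Φ₁ Φ) (ℓ k : ℕ)
    (hℓ : (Set.range Φ₁ ∩ Set.range Φ).ncard = ℓ)
    (hk : Nat.card (T.induce (Φ ⁻¹' (Set.range Φ₁ ∩ Set.range Φ))).ConnectedComponent = k) :
    ProbabilityTheory.cond (gnp n p) {ω | IsOrderedInducedCopy T Φ₁ ω}
        {ω | IsOrderedInducedCopy T Φ ω}
      = ENNReal.ofReal (p ^ ((b : ℤ) - 1 - ((ℓ : ℤ) - (k : ℤ))) *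
          (1 - p) ^ (((b - 1).choose 2 : ℤ) - (ℓ.choose 2 : ℤ) + ((ℓ : ℤ) - (k : ℤ)))) := by
  classical
  set f₁ : Fin b ↪ Fin n := ⟨Φ₁, hΦ₁⟩ with hf₁
  set f : Fin b ↪ Fin n := ⟨Φ, hΦ⟩ with hf
  set A : Set (Fin n) := Set.range Φ₁ ∩ Set.range Φ with hA
  set P : Set (Fin b) := Φ ⁻¹' A with hP
  set E₁ : Set (Sym2 (Fin n)) := (T.map f₁).edgeSet with hE₁
  set E : Set (Sym2 (Fin n)) := (T.map f).edgeSet with hE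
  set S₁ : Set (Sym2 (Fin n)) := ((⊤ : SimpleGraph (Fin b)).map f₁).edgeSet with hS₁
  set S : Set (Sym2 (Fin n)) := ((⊤ : SimpleGraph (Fin b)).map f).edgeSet with hS
  have hE₁S₁ : E₁ ⊆ S₁ := SimpleGraph.edgeSet_mono (SimpleGraph.map_monotone f₁ le_top)
  have hES : E ⊆ S := SimpleGraph.edgeSet_mono (SimpleGraph.map_monotone f le_top)
  -- compatibility : the overlaps agree
  have hkey : E₁ ∩ S = E ∩ S₁ := by
    ext e
    induction e with
    | _ x y =>
      simp only [hE₁, hE, hS₁, hS, Set.mem_inter_iff, mem_edgeSet, map_adj, top_adj]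
      simp only [hf₁, hf, Function.Embedding.coeFn_mk]
      constructor
      · rintro ⟨⟨u, v, huv, hux, hvy⟩, ⟨u', v', -, hux', hvy'⟩⟩
        exact ⟨⟨u', v', (hcomp u v u' v' (hux.trans hux'.symm) (hvy.trans hvy'.symm)).mp huv,
            hux', hvy'⟩, ⟨u, v, huv.ne, hux, hvy⟩⟩
      · rintro ⟨⟨u', v', huv', hux', hvy'⟩, ⟨u, v, -, hux, hvy⟩⟩
        exact ⟨⟨u, v, (hcomp u v u' v' (hux.trans hux'.symm) (hvy.trans hvy'.symm)).mpr huv',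
            hux, hvy⟩, ⟨u', v', huv'.ne, hux', hvy'⟩⟩
  have hEE : E₁ ∩ E = E ∩ S₁ := by
    apply Set.Subset.antisymm
    · intro e he
      exact ⟨he.2, (hkey.symm ▸ (⟨he.1, hES he.2⟩ : e ∈ E₁ ∩ S) : e ∈ E ∩ S₁).2⟩
    · intro e he
      have he' : e ∈ E₁ ∩ S := hkey.symm ▸ he
      exact ⟨he'.1, he.1⟩
  -- S₁ ∩ S is the complete graph on A
  have hSS : S₁ ∩ S = ((⊤ : SimpleGraph A).map (Function.Embedding.subtype _)).edgeSet := by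
    ext e
    induction e with
    | _ x y =>
      simp only [hS₁, hS, Set.mem_inter_iff, mem_edgeSet, map_adj, top_adj]
      simp only [hf₁, hf, Function.Embedding.coeFn_mk, Function.Embedding.coe_subtype]
      constructor
      · rintro ⟨⟨u, v, huv, rfl, rfl⟩, ⟨u', v', -, hux', hvy'⟩⟩
        have hx : Φ₁ u ∈ A := ⟨⟨u, rfl⟩, ⟨u', hux'⟩⟩
        have hy : Φ₁ v ∈ A := ⟨⟨v, rfl⟩, ⟨v', hvy'⟩⟩
        exact ⟨⟨_, hx⟩, ⟨_, hy⟩, fun hc => huv (hΦ₁ (congrArg Subtype.val hc)), rfl, rfl⟩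
      · rintro ⟨⟨x, hx⟩, ⟨y, hy⟩, hxy, rfl, rfl⟩
        obtain ⟨u, hu⟩ := hx.1
        obtain ⟨v, hv⟩ := hy.1
        obtain ⟨u', hu'⟩ := hx.2
        obtain ⟨v', hv'⟩ := hy.2
        have hne : x ≠ y := fun hc => hxy (Subtype.ext hc)
        exact ⟨⟨u, v, fun hc => hne (by rw [← hu, ← hv, hc]), hu, hv⟩,
          ⟨u', v', fun hc => hne (by rw [← hu', ← hv', hc]), hu', hv'⟩⟩
  -- E ∩ S₁ is the image of the induced forest
  have hES₁ : E ∩ S₁ =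
      ((T.induce P).map (⟨fun x => Φ x.val, fun a c h => Subtype.ext (hΦ h)⟩ : P ↪ Fin n)).edgeSet := by
    ext e
    induction e with
    | _ x y =>
      simp only [hE, hS₁, Set.mem_inter_iff, mem_edgeSet, map_adj, top_adj]
      simp only [hf, hf₁, Function.Embedding.coeFn_mk, comap_adj, Function.Embedding.coe_subtype]
      constructor
      · rintro ⟨⟨u, v, huv, rfl, rfl⟩, ⟨u', v', -, hux', hvy'⟩⟩
        have hu : u ∈ P := ⟨⟨u', hux'⟩, ⟨u, rfl⟩⟩
        have hv : v ∈ P := ⟨⟨v', hvy'⟩, ⟨v, rfl⟩⟩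
        exact ⟨⟨u, hu⟩, ⟨v, hv⟩, huv, rfl, rfl⟩
      · rintro ⟨⟨u, hu⟩, ⟨v, hv⟩, huv, rfl, rfl⟩
        have huv' : T.Adj u v := huv
        obtain ⟨u', hu'⟩ := hu.1
        obtain ⟨v', hv'⟩ := hv.1
        refine ⟨⟨u, v, huv', rfl, rfl⟩, ⟨u', v', ?_, hu', hv'⟩⟩
        intro hc
        exact huv'.ne (hΦ (by rw [← hu', ← hv', hc]))
  -- cardinalities
  have ncard_eq_card_edgeFinset : ∀ {α : Type} [Fintype α] (G : SimpleGraph α)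
      [Fintype G.edgeSet], G.edgeSet.ncard = G.edgeFinset.card := by
    intro α _ G _
    rw [Set.ncard_eq_toFinset_card']
    congr 1
  have hTcard : T.edgeSet.ncard + 1 = b := by
    rw [ncard_eq_card_edgeFinset]
    simpa using hT.card_edgeFinset
  have htop : ∀ (α : Type) [Fintype α] [DecidableEq α],
      (⊤ : SimpleGraph α).edgeSet.ncard = (Fintype.card α).choose 2 := by
    intro α _ _
    rw [ncard_eq_card_edgeFinset, SimpleGraph.card_edgeFinset_top_eq_card_choose_two]
  have hE₁card : E₁.ncard = T.edgeSet.ncard := ncard_edgeSet_map f₁ T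
  have hEcard : E.ncard = T.edgeSet.ncard := ncard_edgeSet_map f T
  have hS₁card : S₁.ncard = b.choose 2 := by
    rw [hS₁, ncard_edgeSet_map, htop]
    simp
  have hScard : S.ncard = b.choose 2 := by
    rw [hS, ncard_edgeSet_map, htop]
    simp
  have hAcard : (Fintype.card A) = ℓ := by
    rw [← Nat.card_eq_fintype_card, Nat.card_coe_set_eq]
    exact hℓ
  have hIcard : (S₁ ∩ S).ncard = ℓ.choose 2 := by
    rw [hSS, ncard_edgeSet_map, htop, hAcard]
  have hPcard : P.ncard = ℓ := by
    have h1 : Φ '' P = A := by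
      rw [hP, Set.image_preimage_eq_inter_range]
      exact Set.inter_eq_left.mpr Set.inter_subset_right
    calc P.ncard = (Φ '' P).ncard := (Set.ncard_image_of_injective _ hΦ).symm
      _ = ℓ := by rw [h1]; exact hℓ
  have hFcard : (E ∩ S₁).ncard + k = ℓ := by
    rw [hES₁, ncard_edgeSet_map]
    have hforest := forest_formula (T.induce P)
      (isAcyclic_of_embedding (SimpleGraph.Embedding.induce P) hT.IsAcyclic)
    rw [hk] at hforest
    rw [hforest, ← Nat.card_eq_fintype_card, Nat.card_coe_set_eq, hPcard]
  have hUcard : (S₁ ∪ S).ncard + ℓ.choose 2 = b.choose 2 + b.choose 2 := by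
    rw [← hIcard, Set.ncard_union_add_ncard_inter, hS₁card, hScard]
  have hA2 : (E₁ ∪ E).ncard + (E ∩ S₁).ncard = T.edgeSet.ncard + T.edgeSet.ncard := by
    rw [← hEE, Set.ncard_union_add_ncard_inter, hE₁card, hEcard]
  have hC2 : ((S₁ ∪ S) \ (E₁ ∪ E)).ncard + (E₁ ∪ E).ncard = (S₁ ∪ S).ncard :=
    Set.ncard_diff_add_ncard_of_subset (Set.union_subset_union hE₁S₁ hES)
  have hC1 : (S₁ \ E₁).ncard + E₁.ncard = S₁.ncard :=
    Set.ncard_diff_add_ncard_of_subset hE₁S₁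
  -- events as cylinders and their measures
  have hcylset : ∀ (U : Set (Sym2 (Fin n))) (g : Sym2 (Fin n) → Bool),
      {ω : Sym2 (Fin n) → Bool | ∀ e ∈ U, ω e = g e} =
        {ω | ∀ e ∈ (Set.toFinite U).toFinset, ω e = g e} := by
    intro U g
    ext ω
    exact ⟨fun h e he => h e ((Set.Finite.mem_toFinset _).mp he),
      fun h e he => h e ((Set.Finite.mem_toFinset _).mpr he)⟩
  have main_meas : ∀ (U W : Set (Sym2 (Fin n))) (g : Sym2 (Fin n) → Bool), W ⊆ U →
      (∀ e, g e = true ↔ e ∈ W) →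
      gnp n p {ω | ∀ e ∈ U, ω e = g e} =
        ENNReal.ofReal p ^ W.ncard * ENNReal.ofReal (1 - p) ^ (U \ W).ncard := by
    intro U W g hWU hg
    have h1 : (((Set.toFinite U).toFinset).filter
        (fun e => g e = true)).card = W.ncard := by
      rw [← Set.ncard_coe_finset]
      congr 1
      ext e
      simp only [Finset.coe_filter, Set.Finite.mem_toFinset, Set.mem_setOf_eq, hg]
      exact ⟨fun h => h.2, fun h => ⟨hWU h, h⟩⟩
    have h2 : (((Set.toFinite U).toFinset).filter
        (fun e => g e = false)).card = (U \ W).ncard := by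
      rw [← Set.ncard_coe_finset]
      congr 1
      ext e
      simp only [Finset.coe_filter, Set.Finite.mem_toFinset, Set.mem_setOf_eq,
        Bool.eq_false_iff, Ne, hg, Set.mem_diff]
    rw [hcylset U _, gnp_cyl hp0 hp1, h1, h2]
  have hev₁ : {ω | IsOrderedInducedCopy T Φ₁ ω} =
      {ω : Sym2 (Fin n) → Bool | ∀ e ∈ S₁, ω e = decide (e ∈ E₁)} :=
    copy_event_eq T Φ₁ hΦ₁ _ (fun e => by simp [hE₁, hf₁])
  have hev : {ω | IsOrderedInducedCopy T Φ ω} =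
      {ω : Sym2 (Fin n) → Bool | ∀ e ∈ S, ω e = decide (e ∈ E)} :=
    copy_event_eq T Φ hΦ _ (fun e => by simp [hE, hf])
  have hms : MeasurableSet {ω | IsOrderedInducedCopy T Φ₁ ω} := by
    rw [hev₁, hcylset]
    exact cyl_measurable _ _
  have hμ1 : gnp n p {ω | IsOrderedInducedCopy T Φ₁ ω} =
      ENNReal.ofReal p ^ E₁.ncard * ENNReal.ofReal (1 - p) ^ (S₁ \ E₁).ncard := by
    rw [hev₁]
    exact main_meas S₁ E₁ _ hE₁S₁ (fun e => by simp)
  have hinter : {ω | IsOrderedInducedCopy T Φ₁ ω} ∩ {ω | IsOrderedInducedCopy T Φ ω} =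
      {ω : Sym2 (Fin n) → Bool | ∀ e ∈ S₁ ∪ S, ω e = decide (e ∈ E₁ ∪ E)} := by
    rw [hev₁, hev]
    apply cylinder_inter
    · intro e he
      rw [decide_eq_decide]
      constructor
      · rintro (h | h)
        · exact h
        · exact (hkey.symm ▸ (⟨h, he⟩ : e ∈ E ∩ S₁) : e ∈ E₁ ∩ S).1
      · exact Or.inl
    · intro e he
      rw [decide_eq_decide]
      constructor
      · rintro (h | h)
        · exact (hkey ▸ (⟨h, he⟩ : e ∈ E₁ ∩ S) : e ∈ E ∩ S₁).1
        · exact h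
      · exact Or.inr
  have hμ2 : gnp n p ({ω | IsOrderedInducedCopy T Φ₁ ω} ∩ {ω | IsOrderedInducedCopy T Φ ω}) =
      ENNReal.ofReal p ^ (E₁ ∪ E).ncard *
        ENNReal.ofReal (1 - p) ^ ((S₁ ∪ S) \ (E₁ ∪ E)).ncard := by
    rw [hinter]
    exact main_meas _ _ _ (Set.union_subset_union hE₁S₁ hES) (fun e => by simp)
  rw [ProbabilityTheory.cond_apply hms, hμ1, hμ2]
  -- final arithmetic
  have hpas : (b - 1).choose 2 + (b - 1) = b.choose 2 := by
    obtain ⟨b0, rfl⟩ : ∃ b0, b = b0 + 2 := ⟨b - 2, by omega⟩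
    simp [Nat.choose_succ_succ (b0 + 1) 1, Nat.choose_one_right]
    ring
  set a1 := E₁.ncard with ha1
  set c1 := (S₁ \ E₁).ncard with hc1
  set a2 := (E₁ ∪ E).ncard with ha2
  set c2 := ((S₁ ∪ S) \ (E₁ ∪ E)).ncard with hc2
  set cF := (E ∩ S₁).ncard with hcF
  set mU := (S₁ ∪ S).ncard with hmU
  set tE := T.edgeSet.ncard with htE
  set cb := b.choose 2 with hcb
  set cb1 := (b - 1).choose 2 with hcb1
  set cl := ℓ.choose 2 with hcl
  have hz1 : (b : ℤ) - 1 - ((ℓ : ℤ) - (k : ℤ)) = (a2 : ℤ) - (a1 : ℤ) := by omega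
  have hz2 : ((cb1 : ℤ) - (cl : ℤ) + ((ℓ : ℤ) - (k : ℤ))) = (c2 : ℤ) - (c1 : ℤ) := by omega
  rw [hz1, hz2]
  have h1p0 : (0:ℝ) < 1 - p := by linarith
  rw [zpow_sub₀ hp0.ne', zpow_sub₀ h1p0.ne', zpow_natCast, zpow_natCast, zpow_natCast,
    zpow_natCast, div_mul_div_comm, ENNReal.ofReal_div_of_pos (by positivity),
    ENNReal.ofReal_mul (by positivity), ENNReal.ofReal_mul (by positivity),
    ENNReal.ofReal_pow hp0.le, ENNReal.ofReal_pow h1p0.le, ENNReal.ofReal_pow hp0.le,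
    ENNReal.ofReal_pow h1p0.le, div_eq_mul_inv, mul_comm]
end

section
/- Let T be a tree on the labelled vertex set {1,…,b} with maximum degree at most Δ, let n ≥ b, and fix an injection Φ₁ : {1,…,b} → {1,…,n}. For integers ℓ and k, let S(ℓ,k) be the number of injections Φ : {1,…,b} → {1,…,n} that are compatible with Φ₁ (i.e. for all x,y ∈ A = Im(Φ₁) ∩ Im(Φ), {Φ₁⁻¹(x),Φ₁⁻¹(y)} is an edge of T iff {Φ⁻¹(x),Φ⁻¹(y)} is an edge of T), such that |A| = ℓ and the subgraph of T induced by Φ⁻¹(A) is a forest with k connected components. Then S(ℓ,k) ≤ (n−b)_{b−ℓ} · binom(b,k)² · k! · binom(k+ℓ−1, ℓ) · (2^{2Δ}·Δ!)^{ℓ}. -/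
namespace S8
attribute [local instance] Classical.propDecidable

variable {b Δ : ℕ}

abbrev Letter (Δ : ℕ) := Option (Fin Δ × Fin Δ)
abbrev St (b : ℕ) := List (Fin b × Fin b) × List (Fin b × Fin b)

noncomputable def nbrs (G : SimpleGraph (Fin b)) (u : Fin b) : List (Fin b) :=
  ((G.neighborSet u).toFinite.toFinset.sort (· ≤ ·))

lemma mem_nbrs {G : SimpleGraph (Fin b)} {u v : Fin b} : v ∈ nbrs G u ↔ G.Adj u v := by
  simp [nbrs, Finset.mem_sort, Set.Finite.mem_toFinset]

lemma nbrs_length {G : SimpleGraph (Fin b)} {u : Fin b} (h : (G.neighborSet u).ncard ≤ Δ) :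
    (nbrs G u).length ≤ Δ := by
  rw [nbrs, Finset.length_sort]
  rwa [Set.ncard_eq_toFinset_card _ (G.neighborSet u).toFinite] at h

noncomputable def step (G : SimpleGraph (Fin b)) : St b → Letter Δ → St b
  | (st, acc), none => (st.tail, acc)
  | ([], acc), some _ => ([], acc)
  | ((u, u') :: st, acc), some (i, j) =>
      (((nbrs G u).getD i u, (nbrs G u').getD j u') :: (u, u') :: st,
       ((nbrs G u).getD i u, (nbrs G u').getD j u') :: acc)

noncomputable def run (G : SimpleGraph (Fin b)) (init : Fin b × Fin b)
    (code : List (Letter Δ)) : St b :=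
  code.foldl (step G) ([init], [init])

lemma step_acc (G : SimpleGraph (Fin b)) (st acc : List (Fin b × Fin b)) (a : Letter Δ) :
    step G (st, acc) a = ((step G (st, []) a).1, (step G (st, []) a).2 ++ acc) := by
  match a, st with
  | none, st => simp [step]
  | some (i, j), [] => simp [step]
  | some (i, j), (u, u') :: st => simp [step]

lemma foldl_acc (G : SimpleGraph (Fin b)) (code : List (Letter Δ)) :
    ∀ st acc, code.foldl (step G) (st, acc) =
      ((code.foldl (step G) (st, [])).1, (code.foldl (step G) (st, [])).2 ++ acc) := by
  induction code with
  | nil => intro st acc; simp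
  | cons a c ih =>
    intro st acc
    rw [List.foldl_cons, List.foldl_cons, step_acc]
    rcases h : step G (st, []) a with ⟨st1, acc1⟩
    rw [ih st1 (acc1 ++ acc), ih st1 acc1]
    simp

/-- stack evolution only depends on stack -/
lemma foldl_fst (G : SimpleGraph (Fin b)) (code : List (Letter Δ)) (st acc : List (Fin b × Fin b)) :
    (code.foldl (step G) (st, acc)).1 = (code.foldl (step G) (st, [])).1 := by
  rw [foldl_acc]

noncomputable def reach (G : SimpleGraph (Fin b)) (C : Finset (Fin b)) (r : Fin b) :
    ℕ → Finset (Fin b)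
  | 0 => {r}
  | n + 1 => reach G C r n ∪ C.filter (fun w => ∃ u ∈ reach G C r n, G.Adj u w)

lemma reach_subset (G : SimpleGraph (Fin b)) (C : Finset (Fin b)) (r : Fin b) (hr : r ∈ C) :
    ∀ n, reach G C r n ⊆ C := by
  intro n
  induction n with
  | zero => simpa [reach] using hr
  | succ n ih =>
    rw [reach]
    exact Finset.union_subset ih (Finset.filter_subset _ _)

lemma mem_reach_of_walk (G : SimpleGraph (Fin b)) (C : Finset (Fin b)) (r : Fin b)
    {w : Fin b} (p : G.Walk w r) (hp : ∀ x ∈ p.support, x ∈ C) :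
    ∃ n, w ∈ reach G C r n := by
  induction p with
  | nil => exact ⟨0, by simp [reach]⟩
  | @cons w x r h q ih =>
    obtain ⟨n, hn⟩ := ih (fun y hy => hp y (by simp [hy]))
    refine ⟨n + 1, ?_⟩
    rw [reach]
    apply Finset.mem_union_right
    rw [Finset.mem_filter]
    exact ⟨hp w (by simp), x, hn, h.symm⟩

lemma exists_pendant (G : SimpleGraph (Fin b)) (C : Finset (Fin b)) (r : Fin b) (hr : r ∈ C)
    (hconn : ∀ v ∈ C, ∃ p : G.Walk v r, ∀ x ∈ p.support, x ∈ C)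
    (hne : (C.erase r).Nonempty) :
    ∃ v ∈ C.erase r, (∃ u ∈ C.erase v, G.Adj u v) ∧
      (∀ w ∈ C.erase v, ∃ p : G.Walk w r, ∀ x ∈ p.support, x ∈ C.erase v) := by
  have hex : ∀ w ∈ C, ∃ n, w ∈ reach G C r n := by
    intro w hw
    obtain ⟨p, hp⟩ := hconn w hw
    exact mem_reach_of_walk G C r p hp
  set t : Fin b → ℕ := fun w => if h : ∃ n, w ∈ reach G C r n then Nat.find h else 0 with ht
  have htmem : ∀ w ∈ C, w ∈ reach G C r (t w) := by
    intro w hw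
    have h := hex w hw
    simp only [ht, dif_pos h]
    exact Nat.find_spec h
  have htmin : ∀ w ∈ C, ∀ m, w ∈ reach G C r m → t w ≤ m := by
    intro w hw m hm
    have h := hex w hw
    simp only [ht, dif_pos h]
    exact Nat.find_min' h hm
  have ht0 : ∀ w ∈ C, t w = 0 → w = r := by
    intro w hw h0
    have := htmem w hw
    rw [h0] at this
    simpa [reach] using this
  have hstep : ∀ w ∈ C, t w ≠ 0 → ∃ u ∈ C, G.Adj u w ∧ t u < t w := by
    intro w hw h0
    obtain ⟨m, hm⟩ : ∃ m, t w = m + 1 := ⟨t w - 1, by omega⟩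
    have hmem := htmem w hw
    rw [hm, reach] at hmem
    have hnot : w ∉ reach G C r m := by
      intro hc
      have := htmin w hw m hc
      omega
    rcases Finset.mem_union.mp hmem with h | h
    · exact absurd h hnot
    · rw [Finset.mem_filter] at h
      obtain ⟨-, u, hu, hadj⟩ := h
      refine ⟨u, reach_subset G C r hr m hu, hadj, ?_⟩
      have := htmin u (reach_subset G C r hr m hu) m hu
      omega
  obtain ⟨v, hv, hvmax⟩ := Finset.exists_max_image (C.erase r) t hne
  have hvC : v ∈ C := Finset.mem_of_mem_erase hv
  have hvr : v ≠ r := Finset.ne_of_mem_erase hv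
  have htv : t v ≠ 0 := fun h => hvr (ht0 v hvC h)
  refine ⟨v, hv, ?_, ?_⟩
  · obtain ⟨u, hu, hadj, hlt⟩ := hstep v hvC htv
    exact ⟨u, Finset.mem_erase.mpr ⟨by rintro rfl; omega, hu⟩, hadj⟩
  · -- walks avoiding v
    have key : ∀ N, ∀ w ∈ C, w ≠ v → t w ≤ N →
        ∃ p : G.Walk w r, ∀ x ∈ p.support, x ∈ C.erase v := by
      intro N
      induction N with
      | zero =>
        intro w hw hwv h0
        have : w = r := ht0 w hw (Nat.le_zero.mp h0)
        subst this
        exact ⟨SimpleGraph.Walk.nil, by intro x hx; rw [SimpleGraph.Walk.support_nil] at hx; simp at hx; subst hx; exact Finset.mem_erase.mpr ⟨hwv, hw⟩⟩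
      | succ N ih =>
        intro w hw hwv hN
        by_cases h0 : t w = 0
        · have : w = r := ht0 w hw h0
          subst this
          exact ⟨SimpleGraph.Walk.nil, by intro x hx; rw [SimpleGraph.Walk.support_nil] at hx; simp at hx; subst hx; exact Finset.mem_erase.mpr ⟨hwv, hw⟩⟩
        · obtain ⟨u, hu, hadj, hlt⟩ := hstep w hw h0
          have hwr : w ≠ r := by
            intro h; subst h
            have : t w = 0 := Nat.le_zero.mp (htmin w hw 0 (by simp [reach]))
            exact h0 this
          have hwle : t w ≤ t v := hvmax w (Finset.mem_erase.mpr ⟨hwr, hw⟩)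
          have huv : u ≠ v := by intro h; subst h; omega
          obtain ⟨q, hq⟩ := ih u hu huv (by omega)
          refine ⟨SimpleGraph.Walk.cons hadj.symm q, ?_⟩
          intro x hx
          rw [SimpleGraph.Walk.support_cons] at hx
          rcases List.mem_cons.mp hx with h | h
          · subst h; exact Finset.mem_erase.mpr ⟨hwv, hw⟩
          · exact hq x h
    intro w hw
    exact key (t w) w (Finset.mem_of_mem_erase hw) (Finset.ne_of_mem_erase hw) le_rfl

variable {Δ' : ℕ}

theorem dfs (G : SimpleGraph (Fin b)) {Δ : ℕ} (hΔ : ∀ u, (nbrs G u).length ≤ Δ)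
    (ψ : Fin b → Fin b) :
    ∀ (N : ℕ) (C : Finset (Fin b)), C.card ≤ N → ∀ (r : Fin b), r ∈ C →
    (∀ v ∈ C, ∃ p : G.Walk v r, ∀ x ∈ p.support, x ∈ C) →
    (∀ u v, u ∈ C → v ∈ C → G.Adj u v → G.Adj (ψ u) (ψ v)) →
    ∃ code : List (Letter Δ), code.length = 2 * (C.card - 1) ∧
      (run G (r, ψ r) code).2.toFinset = C.image (fun v => (v, ψ v)) ∧
      ∀ u ∈ C, ∃ p, p <+: code ∧
        ∃ rest, (List.foldl (step G) ([(r, ψ r)], []) p).1 = (u, ψ u) :: rest := by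
  intro N
  induction N with
  | zero =>
    intro C hcard r hr _ _
    exact absurd (Finset.card_pos.mpr ⟨r, hr⟩) (by omega)
  | succ N ih =>
    intro C hcard r hr hconn hpres
    by_cases hsing : C.erase r = ∅
    · have hC : C = {r} := by
        apply Finset.eq_singleton_iff_unique_mem.mpr
        refine ⟨hr, fun x hx => ?_⟩
        by_contra hne
        exact absurd (Finset.mem_erase.mpr ⟨hne, hx⟩) (by simp [hsing])
      subst hC
      refine ⟨[], by simp, by simp [run], fun u hu => ?_⟩
      simp at hu
      subst hu
      exact ⟨[], List.nil_prefix, [], rfl⟩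
    · obtain ⟨v, hv, ⟨u, hu, huv⟩, havoid⟩ :=
        exists_pendant G C r hr hconn (Finset.nonempty_iff_ne_empty.mpr hsing)
      have hvC : v ∈ C := Finset.mem_of_mem_erase hv
      have hvr : v ≠ r := Finset.ne_of_mem_erase hv
      set C' := C.erase v with hC'
      have hrC' : r ∈ C' := Finset.mem_erase.mpr ⟨fun h => hvr h.symm, hr⟩
      have hcard' : C'.card = C.card - 1 := Finset.card_erase_of_mem hvC
      have hcard2 : 2 ≤ C.card := by
        have := Finset.card_le_card (fun x hx => Finset.mem_of_mem_erase hx :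
          C.erase r ⊆ C)
        have h1 : 0 < (C.erase r).card := Finset.card_pos.mpr
          (Finset.nonempty_iff_ne_empty.mpr hsing)
        have h2 : (C.erase r).card = C.card - 1 := Finset.card_erase_of_mem hr
        omega
      have hpres' : ∀ x y, x ∈ C' → y ∈ C' → G.Adj x y → G.Adj (ψ x) (ψ y) :=
        fun x y hx hy => hpres x y (Finset.mem_of_mem_erase hx) (Finset.mem_of_mem_erase hy)
      obtain ⟨code', hlen', hdec', hinv'⟩ :=
        ih C' (by omega) r hrC' havoid hpres'
      -- insertion data
      have huC : u ∈ C := Finset.mem_of_mem_erase hu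
      have hunv : u ≠ v := Finset.ne_of_mem_erase hu
      have hvmem : v ∈ nbrs G u := mem_nbrs.mpr huv
      have hψadj : G.Adj (ψ u) (ψ v) := hpres u v huC hvC huv
      have hψmem : ψ v ∈ nbrs G (ψ u) := mem_nbrs.mpr hψadj
      set i : Fin Δ := ⟨(nbrs G u).idxOf v,
        lt_of_lt_of_le (List.idxOf_lt_length_iff.mpr hvmem) (hΔ u)⟩ with hi
      set j : Fin Δ := ⟨(nbrs G (ψ u)).idxOf (ψ v),
        lt_of_lt_of_le (List.idxOf_lt_length_iff.mpr hψmem) (hΔ (ψ u))⟩ with hj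
      have hgetv : (nbrs G u).getD i u = v := by
        rw [List.getD_eq_getElem _ _ (List.idxOf_lt_length_iff.mpr hvmem)]
        exact List.getElem_idxOf _
      have hgetψ : (nbrs G (ψ u)).getD j (ψ u) = ψ v := by
        rw [List.getD_eq_getElem _ _ (List.idxOf_lt_length_iff.mpr hψmem)]
        exact List.getElem_idxOf _
      obtain ⟨p, hppre, rest, hphead⟩ := hinv' u hu
      obtain ⟨q, hpq⟩ := id hppre
      set E : List (Letter Δ) → St b := fun l => List.foldl (step G) ([(r, ψ r)], []) l with hE
      set code : List (Letter Δ) := p ++ [some (i, j), none] ++ q with hcode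
      -- state after p
      rcases hEp : E p with ⟨stp, acp⟩
      have hstp : stp = (u, ψ u) :: rest := by
        have h2 : (E p).1 = (u, ψ u) :: rest := hphead
        rw [hEp] at h2
        exact h2
      -- step computations
      have hstep1 : step G (stp, acp) (some (i, j)) =
          ((v, ψ v) :: (u, ψ u) :: rest, (v, ψ v) :: acp) := by
        rw [hstp]
        show step G ((u, ψ u) :: rest, acp) (some (i, j)) = _
        simp only [step]
        rw [hgetv, hgetψ]
      have hE2 : E (p ++ [some (i, j), none]) = ((u, ψ u) :: rest, (v, ψ v) :: acp) := by
        show List.foldl (step G) ([(r, ψ r)], []) (p ++ [some (i, j), none]) = _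
        rw [List.foldl_append]
        show List.foldl (step G) (E p) _ = _
        rw [hEp]
        simp only [List.foldl_cons, List.foldl_nil, hstep1]
        simp [step]
      have hEcode : E code = ((List.foldl (step G) (stp, []) q).1,
          (List.foldl (step G) (stp, []) q).2 ++ (v, ψ v) :: acp) := by
        show List.foldl (step G) ([(r, ψ r)], []) (p ++ [some (i, j), none] ++ q) = _
        rw [List.foldl_append]
        have : List.foldl (step G) ([(r, ψ r)], []) (p ++ [some (i,j), none]) =
            ((u, ψ u) :: rest, (v, ψ v) :: acp) := hE2
        rw [this, ← hstp]
        exact foldl_acc G q stp ((v, ψ v) :: acp)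
      have hEcode' : E code' = ((List.foldl (step G) (stp, []) q).1,
          (List.foldl (step G) (stp, []) q).2 ++ acp) := by
        rw [← hpq]
        show List.foldl (step G) ([(r, ψ r)], []) (p ++ q) = _
        rw [List.foldl_append]
        show List.foldl (step G) (E p) q = _
        rw [hEp]
        exact foldl_acc G q stp acp
      -- relation between run and E
      have hrunE : ∀ l : List (Letter Δ), run G (r, ψ r) l = ((E l).1, (E l).2 ++ [(r, ψ r)]) := by
        intro l
        show List.foldl (step G) ([(r, ψ r)], [(r, ψ r)]) l = _
        rw [foldl_acc G l [(r, ψ r)] [(r, ψ r)]]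
      refine ⟨code, ?_, ?_, ?_⟩
      · -- length
        have : code.length = code'.length + 2 := by
          rw [hcode, ← hpq]; simp; omega
        rw [this, hlen', hcard']
        omega
      · -- decoded pairs
        have h1 : (run G (r, ψ r) code).2 = (List.foldl (step G) (stp, []) q).2 ++
            (v, ψ v) :: acp ++ [(r, ψ r)] := by rw [hrunE, hEcode]
        have h2 : (run G (r, ψ r) code').2 = (List.foldl (step G) (stp, []) q).2 ++
            acp ++ [(r, ψ r)] := by rw [hrunE, hEcode']
        have himg : C.image (fun v => (v, ψ v)) =
            insert (v, ψ v) (C'.image (fun v => (v, ψ v))) := by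
          conv_lhs => rw [← Finset.insert_erase hvC]
          rw [Finset.image_insert]
        rw [h1, himg, ← hdec', h2]
        ext x
        simp only [List.toFinset_append, List.toFinset_cons, Finset.mem_union,
          Finset.mem_insert, List.mem_toFinset]
        tauto
      · -- invariant
        intro u₀ hu₀
        by_cases hu₀v : u₀ = v
        · subst hu₀v
          refine ⟨p ++ [some (i, j)], ⟨none :: q, by rw [hcode]; simp⟩, (u, ψ u) :: rest, ?_⟩
          rw [List.foldl_append]
          show (List.foldl (step G) (E p) _).1 = _
          rw [hEp]
          simp only [List.foldl_cons, List.foldl_nil, hstep1]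
        · have hu₀C' : u₀ ∈ C' := Finset.mem_erase.mpr ⟨hu₀v, hu₀⟩
          obtain ⟨p₀, hp₀pre, rest₀, hp₀head⟩ := hinv' u₀ hu₀C'
          rcases List.prefix_or_prefix_of_prefix hp₀pre hppre with hcase | hcase
          · refine ⟨p₀, ?_, rest₀, hp₀head⟩
            exact hcase.trans ⟨[some (i, j), none] ++ q, by rw [hcode]; simp⟩
          · obtain ⟨q₀, rfl⟩ := hcase
            have hq₀ : q₀ <+: q := by
              have : p ++ q₀ <+: p ++ q := by rw [hpq]; exact hp₀pre
              exact (List.prefix_append_right_inj p).mp this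
            refine ⟨p ++ [some (i, j), none] ++ q₀, ?_, ?_⟩
            · rw [hcode]
              obtain ⟨q₁, rfl⟩ := hq₀
              exact ⟨q₁, by simp⟩
            · have hfst : (List.foldl (step G) ([(r, ψ r)], []) (p ++ [some (i,j), none] ++ q₀)).1
                  = (List.foldl (step G) (stp, []) q₀).1 := by
                rw [List.foldl_append]
                have : List.foldl (step G) ([(r, ψ r)], ([] : List (Fin b × Fin b)))
                    (p ++ [some (i,j), none]) = ((u, ψ u) :: rest, (v, ψ v) :: acp) := hE2
                rw [this, ← hstp, foldl_fst]
              have hfst₀ : (List.foldl (step G) ([(r, ψ r)], []) (p ++ q₀)).1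
                  = (List.foldl (step G) (stp, []) q₀).1 := by
                rw [List.foldl_append]
                show (List.foldl (step G) (E p) q₀).1 = _
                rw [hEp, foldl_fst]
              refine ⟨rest₀, ?_⟩
              rw [hfst, ← hfst₀]
              exact hp₀head

def CompT (k m : ℕ) := {f : Fin k → Fin (m + 1) // ∑ i, (f i : ℕ) = m}

noncomputable instance (k m : ℕ) : Fintype (CompT k m) := by
  unfold CompT; infer_instance

lemma compT_card_le (k m : ℕ) :
    Fintype.card (CompT k m) ≤ (k + m - 1).choose m := by
  have hinj : Function.Injective (fun f : CompT k m =>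
      (⟨∑ i, Multiset.replicate ((f.1 i : ℕ)) i, by
        simp [f.2]⟩ : Sym (Fin k) m)) := by
    intro f g h
    apply Subtype.ext
    funext i
    have h2 : (∑ j, Multiset.replicate ((f.1 j : ℕ)) j)
        = (∑ j, Multiset.replicate ((g.1 j : ℕ)) j) := congrArg Subtype.val h
    have hc := congrArg (Multiset.count i) h2
    rw [Multiset.count_sum', Multiset.count_sum'] at hc
    simp [Multiset.count_replicate] at hc
    exact Fin.ext hc
  calc Fintype.card (CompT k m) ≤ Fintype.card (Sym (Fin k) m) :=
        Fintype.card_le_of_injective _ hinj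
    _ = (k + m - 1).choose m := by rw [Sym.card_sym_eq_choose]; simp

lemma ofFn_cast_get {α : Type*} (l : List α) (m : ℕ) (h : m = l.length) :
    List.ofFn (fun t : Fin m => l.get (Fin.cast h t)) = l := by
  subst h
  exact List.ofFn_get l

noncomputable def decodeAll {b : ℕ} (G : SimpleGraph (Fin b)) {Δ ℓ k : ℕ}
    (R : {R : Finset (Fin b) // R.card = k}) (ρ : Fin k ↪ Fin b)
    (fc : Σ f : CompT k (ℓ - k), ∀ i : Fin k, Fin (2 * (f.1 i : ℕ)) → Letter Δ) :
    Finset (Fin b × Fin b) :=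
  Finset.univ.biUnion fun i : Fin k =>
    (run G ((R.1.orderIsoOfFin R.2 i : Fin b), ρ i) (List.ofFn (fc.2 i))).2.toFinset

lemma encode_exists {b : ℕ} (G : SimpleGraph (Fin b)) {Δ : ℕ}
    (hΔ : ∀ u, (nbrs G u).length ≤ Δ) (Bs : Set (Fin b)) (ψ : Fin b → Fin b) {ℓ k : ℕ}
    (hBcard : (Set.toFinite Bs).toFinset.card = ℓ)
    (hk : Nat.card (G.induce Bs).ConnectedComponent = k)
    (hψinj : Set.InjOn ψ Bs)
    (hpres : ∀ u v, u ∈ Bs → v ∈ Bs → G.Adj u v → G.Adj (ψ u) (ψ v)) :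
    ∃ (R : {R : Finset (Fin b) // R.card = k}) (ρ : Fin k ↪ Fin b)
      (fc : Σ f : CompT k (ℓ - k), ∀ i : Fin k, Fin (2 * (f.1 i : ℕ)) → Letter Δ),
      decodeAll G R ρ fc = (Set.toFinite Bs).toFinset.image (fun v => (v, ψ v)) := by
  classical
  set B : Finset (Fin b) := (Set.toFinite Bs).toFinset with hB
  have hmemB : ∀ v, v ∈ B ↔ v ∈ Bs := fun v => Set.Finite.mem_toFinset _
  set Gi := G.induce Bs with hGi
  haveI : Finite Gi.ConnectedComponent := by infer_instance
  let e : Gi.ConnectedComponent ≃ Fin k := Finite.equivFinOfCardEq hk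
  set fib : Fin k → Finset (Fin b) := fun i =>
    B.filter (fun v => ∃ h : v ∈ Bs, Gi.connectedComponentMk ⟨v, h⟩ = e.symm i) with hfib
  have hfib_mem : ∀ i v, v ∈ fib i ↔
      ∃ h : v ∈ Bs, Gi.connectedComponentMk ⟨v, h⟩ = e.symm i := by
    intro i v
    rw [hfib]
    simp only [Finset.mem_filter]
    constructor
    · rintro ⟨-, h⟩; exact h
    · rintro ⟨h, h2⟩; exact ⟨(hmemB v).mpr h, h, h2⟩
  have hfib_sub : ∀ i, fib i ⊆ B := fun i => Finset.filter_subset _ _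
  have hfib_subBs : ∀ i v, v ∈ fib i → v ∈ Bs := fun i v hv =>
    (hmemB v).mp (hfib_sub i hv)
  have hdisj : ∀ i j, i ≠ j → Disjoint (fib i) (fib j) := by
    intro i j hij
    rw [Finset.disjoint_left]
    intro v hvi hvj
    obtain ⟨h1, h2⟩ := (hfib_mem i v).mp hvi
    obtain ⟨h3, h4⟩ := (hfib_mem j v).mp hvj
    apply hij
    have : e.symm i = e.symm j := by rw [← h2, ← h4]
    exact e.symm.injective this
  have hcover : B = Finset.univ.biUnion fib := by
    ext v
    simp only [Finset.mem_biUnion, Finset.mem_univ, true_and]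
    constructor
    · intro hv
      have hvB : v ∈ Bs := (hmemB v).mp hv
      refine ⟨e (Gi.connectedComponentMk ⟨v, hvB⟩), ?_⟩
      rw [hfib_mem]
      exact ⟨hvB, by simp⟩
    · rintro ⟨i, hi⟩
      exact hfib_sub i hi
  have hfib_ne : ∀ i, (fib i).Nonempty := by
    intro i
    obtain ⟨x, hx⟩ := (e.symm i).exists_rep
    refine ⟨x.1, ?_⟩
    rw [hfib_mem]
    exact ⟨x.2, hx⟩
  have hsum : ∑ i, (fib i).card = ℓ := by
    rw [← hBcard, hcover]
    exact (Finset.card_biUnion (fun i _ j _ h => hdisj i j h)).symm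
  set r : Fin k → Fin b := fun i => (fib i).min' (hfib_ne i) with hrdef
  have hrmem : ∀ i, r i ∈ fib i := fun i => Finset.min'_mem _ _
  have hrinj : Function.Injective r := by
    intro i j h
    by_contra hne
    exact Finset.disjoint_left.mp (hdisj i j hne) (hrmem i) (h ▸ hrmem j)
  -- connectivity of each fiber towards its root
  have hconn : ∀ i, ∀ v ∈ fib i, ∃ p : G.Walk v (r i), ∀ x ∈ p.support, x ∈ fib i := by
    intro i v hv
    obtain ⟨hvBs, hvc⟩ := (hfib_mem i v).mp hv
    obtain ⟨hrBs, hrc⟩ := (hfib_mem i (r i)).mp (hrmem i)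
    have hreach : Gi.Reachable ⟨v, hvBs⟩ ⟨r i, hrBs⟩ :=
      SimpleGraph.ConnectedComponent.eq.mp (hvc.trans hrc.symm)
    obtain ⟨wk⟩ := hreach
    let hom : Gi →g G := ⟨Subtype.val, fun {a b0} h => h⟩
    refine ⟨wk.map hom, ?_⟩
    intro x hx
    rw [SimpleGraph.Walk.support_map] at hx
    obtain ⟨y, hy, rfl⟩ := List.mem_map.mp hx
    rw [hfib_mem]
    refine ⟨y.2, ?_⟩
    have hreachy : Gi.Reachable ⟨v, hvBs⟩ y := ⟨wk.takeUntil y hy⟩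
    have : Gi.connectedComponentMk y = Gi.connectedComponentMk ⟨v, hvBs⟩ :=
      SimpleGraph.ConnectedComponent.eq.mpr hreachy.symm
    exact this.trans hvc
  have hpres' : ∀ i, ∀ u v, u ∈ fib i → v ∈ fib i → G.Adj u v → G.Adj (ψ u) (ψ v) :=
    fun i u v hu hv => hpres u v (hfib_subBs i u hu) (hfib_subBs i v hv)
  -- apply dfs per fiber
  have hdfs : ∀ i, ∃ code : List (Letter Δ), code.length = 2 * ((fib i).card - 1) ∧
      (run G (r i, ψ (r i)) code).2.toFinset = (fib i).image (fun v => (v, ψ v)) := by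
    intro i
    obtain ⟨code, h1, h2, -⟩ := dfs G hΔ ψ (fib i).card (fib i) le_rfl (r i) (hrmem i)
      (hconn i) (hpres' i)
    exact ⟨code, h1, h2⟩
  choose code hlen hdec using hdfs
  -- the root set and the sorted order
  set R : Finset (Fin b) := Finset.univ.image r with hRdef
  have hR : R.card = k := by
    show (Finset.univ.image r).card = k
    rw [Finset.card_image_of_injective _ hrinj, Finset.card_univ, Fintype.card_fin]
  set oi := R.orderIsoOfFin hR with hoi
  have hmemR : ∀ s : Fin k, ((oi s : R) : Fin b) ∈ R := fun s => (oi s).2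
  have hπ : ∀ s : Fin k, ∃ j : Fin k, r j = (oi s : Fin b) := by
    intro s
    have h0 : ((oi s : R) : Fin b) ∈ Finset.univ.image r := hmemR s
    obtain ⟨j, -, hj⟩ := Finset.mem_image.mp h0
    exact ⟨j, hj⟩
  choose π hπspec using hπ
  have hπinj : Function.Injective π := by
    intro s t h
    have : (oi s : Fin b) = (oi t : Fin b) := by rw [← hπspec s, ← hπspec t, h]
    exact oi.injective (Subtype.ext this)
  have hπbij : Function.Bijective π := (Finite.injective_iff_bijective).mp hπinj
  -- composition sizes
  have hsum1 : ∑ j, ((fib j).card - 1) = ℓ - k := by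
    have h1 : ∀ j : Fin k, (fib j).card - 1 + 1 = (fib j).card := fun j =>
      Nat.succ_pred_eq_of_pos (Finset.card_pos.mpr (hfib_ne j))
    have h2 : ∑ j, ((fib j).card - 1 + 1) = ∑ j, (fib j).card :=
      Finset.sum_congr rfl (fun j _ => h1 j)
    rw [Finset.sum_add_distrib] at h2
    simp at h2
    omega
  have hle : ∀ j, (fib j).card - 1 ≤ ℓ - k := by
    intro j
    rw [← hsum1]
    exact Finset.single_le_sum (f := fun j => (fib j).card - 1)
      (fun _ _ => Nat.zero_le _) (Finset.mem_univ j)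
  set f : Fin k → Fin (ℓ - k + 1) := fun i => ⟨(fib (π i)).card - 1,
    Nat.lt_succ_of_le (hle (π i))⟩ with hfdef
  have hfsum : ∑ i, ((f i : ℕ)) = ℓ - k := by
    show ∑ i, ((fib (π i)).card - 1) = ℓ - k
    rw [Fintype.sum_bijective π hπbij (fun i => (fib (π i)).card - 1)
      (fun j => (fib j).card - 1) (fun _ => rfl)]
    exact hsum1
  have hcastlen : ∀ i : Fin k, 2 * ((f i : ℕ)) = (code (π i)).length := by
    intro i
    rw [hlen (π i)]
  refine ⟨⟨R, hR⟩, ⟨fun i => ψ (r (π i)), ?_⟩, ⟨⟨f, hfsum⟩,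
    fun i => fun t => (code (π i)).get (Fin.cast (hcastlen i) t)⟩, ?_⟩
  · intro s t h
    have h2 : r (π s) = r (π t) := by
      apply hψinj (hfib_subBs _ _ (hrmem (π s))) (hfib_subBs _ _ (hrmem (π t))) h
    exact hπinj (hrinj h2)
  · -- decodeAll computation
    have hroot : ∀ i : Fin k, ((R.orderIsoOfFin hR i : R) : Fin b) = r (π i) := fun i =>
      (hπspec i).symm
    have hEq : ∀ i : Fin k,
        (run G (((R.orderIsoOfFin hR i : R) : Fin b), ψ (r (π i)))
          (List.ofFn fun t => (code (π i)).get (Fin.cast (hcastlen i) t))).2.toFinset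
          = (fib (π i)).image (fun v => (v, ψ v)) := by
      intro i
      rw [ofFn_cast_get, hroot i]
      exact hdec (π i)
    have hre : (Finset.univ.biUnion fun i => (fib (π i)).image (fun v => (v, ψ v)))
        = Finset.univ.biUnion fun j => (fib j).image (fun v => (v, ψ v)) := by
      ext x
      simp only [Finset.mem_biUnion, Finset.mem_univ, true_and]
      constructor
      · rintro ⟨i, hi⟩; exact ⟨π i, hi⟩
      · rintro ⟨j, hj⟩
        obtain ⟨i, rfl⟩ := hπbij.2 j
        exact ⟨i, hj⟩
    unfold decodeAll
    simp only [Function.Embedding.coeFn_mk]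
    calc (Finset.univ.biUnion fun i : Fin k =>
            (run G (((R.orderIsoOfFin hR i : R) : Fin b), ψ (r (π i)))
              (List.ofFn fun t => (code (π i)).get (Fin.cast (hcastlen i) t))).2.toFinset)
        = Finset.univ.biUnion fun i => (fib (π i)).image (fun v => (v, ψ v)) :=
          Finset.biUnion_congr rfl (fun i _ => hEq i)
      _ = Finset.univ.biUnion fun j => (fib j).image (fun v => (v, ψ v)) := hre
      _ = (Finset.univ.biUnion fib).image (fun v => (v, ψ v)) := by
          ext x
          simp only [Finset.mem_biUnion, Finset.mem_univ, true_and, Finset.mem_image]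
          tauto
      _ = B.image (fun v => (v, ψ v)) := by rw [← hcover]

lemma keyineq (Δ : ℕ) : (Δ * Δ + 1) ^ 2 ≤ 2 ^ (2 * Δ) * Δ.factorial := by
  induction Δ with
  | zero => decide
  | succ d ih =>
    have hstep : ((d + 1) * (d + 1) + 1) ^ 2 ≤ 4 * (d + 1) * ((d * d + 1) ^ 2) := by
      match d with
      | 0 => decide
      | 1 => decide
      | (m + 2) =>
        have h1 : (m + 2) * (m + 2) + 2 * (m + 2) + 2 ≤ 2 * ((m + 2) * (m + 2) + 1) := by
          nlinarith
        have h2 : ((m + 3) * (m + 3) + 1) = (m + 2) * (m + 2) + 2 * (m + 2) + 2 := by ring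
        calc ((m + 3) * (m + 3) + 1) ^ 2 ≤ (2 * ((m + 2) * (m + 2) + 1)) ^ 2 := by
              rw [h2]; exact Nat.pow_le_pow_left h1 2
          _ = 4 * ((m + 2) * (m + 2) + 1) ^ 2 := by ring
          _ ≤ 4 * (m + 3) * ((m + 2) * (m + 2) + 1) ^ 2 := by nlinarith
    calc ((d + 1) * (d + 1) + 1) ^ 2 ≤ 4 * (d + 1) * ((d * d + 1) ^ 2) := hstep
      _ ≤ 4 * (d + 1) * (2 ^ (2 * d) * d.factorial) := by
          exact Nat.mul_le_mul_left _ ih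
      _ = 2 ^ (2 * (d + 1)) * (d + 1).factorial := by
          rw [Nat.factorial_succ, show 2 * (d + 1) = 2 * d + 2 by ring, pow_add]
          ring

lemma powBound (Δ ℓ k : ℕ) :
    ((Δ * Δ + 1) ^ 2) ^ (ℓ - k) ≤ (2 ^ (2 * Δ) * Δ.factorial) ^ ℓ := by
  calc ((Δ * Δ + 1) ^ 2) ^ (ℓ - k) ≤ ((Δ * Δ + 1) ^ 2) ^ ℓ :=
        Nat.pow_le_pow_right (Nat.one_le_iff_ne_zero.mpr (by positivity)) (Nat.sub_le ℓ k)
    _ ≤ (2 ^ (2 * Δ) * Δ.factorial) ^ ℓ := Nat.pow_le_pow_left (keyineq Δ) ℓ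

lemma chooseBound (k ℓ : ℕ) :
    (k + (ℓ - k) - 1).choose (ℓ - k) ≤ (k + ℓ - 1).choose ℓ := by
  rcases Nat.eq_zero_or_pos k with hk | hk
  · subst hk
    rcases Nat.eq_zero_or_pos ℓ with hl | hl
    · subst hl; simp
    · have : (0 + (ℓ - 0) - 1).choose (ℓ - 0) = 0 := by
        apply Nat.choose_eq_zero_of_lt
        omega
      rw [this]
      exact Nat.zero_le _
  · rcases le_or_gt k ℓ with hkl | hkl
    · have h1 : k + (ℓ - k) - 1 = ℓ - 1 := by omega
      have h2 : (ℓ - 1).choose (ℓ - k) = (ℓ - 1).choose (k - 1) := by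
        have h3 : ℓ - k ≤ ℓ - 1 := by omega
        rw [← Nat.choose_symm h3]
        congr 1
        omega
      have h4 : (k + ℓ - 1).choose ℓ = (k + ℓ - 1).choose (k - 1) := by
        have h5 : ℓ ≤ k + ℓ - 1 := by omega
        rw [← Nat.choose_symm h5]
        congr 1
        omega
      rw [h1, h2, h4]
      exact Nat.choose_le_choose (k - 1) (by omega)
    · have h1 : ℓ - k = 0 := by omega
      rw [h1]
      simp only [Nat.choose_zero_right]
      exact Nat.choose_pos (by omega)

def Tgt (b n Δ ℓ k : ℕ) :=
  {R : Finset (Fin b) // R.card = k} × (Fin k ↪ Fin b) ×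
    (Σ f : CompT k (ℓ - k), ∀ i : Fin k, Fin (2 * (f.1 i : ℕ)) → Letter Δ) ×
    (Fin (b - ℓ) ↪ Fin (n - b))

noncomputable instance (b n Δ ℓ k : ℕ) : Fintype (Tgt b n Δ ℓ k) := by
  unfold Tgt CompT
  infer_instance

lemma orderIso_val_congr {α : Type*} [LinearOrder α] {s t : Finset α} (h : s = t) {q : ℕ}
    (hs : s.card = q) (ht : t.card = q) (i : Fin q) :
    ((s.orderIsoOfFin hs i : s) : α) = ((t.orderIsoOfFin ht i : t) : α) := by
  subst h; rfl

lemma orderIsoSymm_congr {α : Type*} [LinearOrder α] {s t : Finset α} (h : s = t) {q : ℕ}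
    (hs : s.card = q) (ht : t.card = q) (v : α) (hvs : v ∈ s) (hvt : v ∈ t) :
    (s.orderIsoOfFin hs).symm ⟨v, hvs⟩ = (t.orderIsoOfFin ht).symm ⟨v, hvt⟩ := by
  subst h; rfl

lemma tgt_card_le (b n Δ ℓ k : ℕ) :
    Nat.card (Tgt b n Δ ℓ k) ≤
      (n - b).descFactorial (b - ℓ) * (b.choose k) ^ 2 * k.factorial *
        ((k + ℓ - 1).choose ℓ) * (2 ^ (2 * Δ) * Δ.factorial) ^ ℓ := by
  classical
  unfold Tgt
  rw [Nat.card_prod, Nat.card_prod, Nat.card_prod]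
  have e1 : Nat.card {R : Finset (Fin b) // R.card = k} = b.choose k := by
    rw [Nat.card_eq_fintype_card]
    rw [Fintype.card_finset_len, Fintype.card_fin]
  have e2 : Nat.card (Fin k ↪ Fin b) = k.factorial * b.choose k := by
    rw [Nat.card_eq_fintype_card, Fintype.card_embedding_eq, Fintype.card_fin, Fintype.card_fin,
      Nat.descFactorial_eq_factorial_mul_choose]
  have e4 : Nat.card (Fin (b - ℓ) ↪ Fin (n - b)) = (n - b).descFactorial (b - ℓ) := by
    rw [Nat.card_eq_fintype_card, Fintype.card_embedding_eq, Fintype.card_fin, Fintype.card_fin]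
  have e3 : Nat.card (Σ f : CompT k (ℓ - k), ∀ i : Fin k, Fin (2 * (f.1 i : ℕ)) → Letter Δ)
      = Fintype.card (CompT k (ℓ - k)) * ((Δ * Δ + 1) ^ 2) ^ (ℓ - k) := by
    rw [Nat.card_eq_fintype_card, Fintype.card_sigma]
    have hfib : ∀ f : CompT k (ℓ - k),
        Fintype.card (∀ i : Fin k, Fin (2 * (f.1 i : ℕ)) → Letter Δ)
          = ((Δ * Δ + 1) ^ 2) ^ (ℓ - k) := by
      intro f
      rw [Fintype.card_pi]
      have h1 : ∀ i : Fin k, Fintype.card (Fin (2 * (f.1 i : ℕ)) → Letter Δ)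
          = (Δ * Δ + 1) ^ (2 * (f.1 i : ℕ)) := by
        intro i
        rw [Fintype.card_fun, Fintype.card_fin]
        congr 1
        simp [Letter]
      rw [Finset.prod_congr rfl (fun i _ => h1 i), Finset.prod_pow_eq_pow_sum,
        ← Finset.mul_sum, f.2, pow_mul]
    rw [Finset.sum_congr rfl (fun f _ => hfib f), Finset.sum_const, Finset.card_univ, smul_eq_mul]
  rw [e1, e2, e3, e4]
  have b3 : Fintype.card (CompT k (ℓ - k)) ≤ (k + ℓ - 1).choose ℓ :=
    le_trans (compT_card_le k (ℓ - k)) (chooseBound k ℓ)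
  have b4 := powBound Δ ℓ k
  calc b.choose k * (k.factorial * b.choose k *
        (Fintype.card (CompT k (ℓ - k)) * ((Δ * Δ + 1) ^ 2) ^ (ℓ - k) *
          (n - b).descFactorial (b - ℓ)))
      ≤ b.choose k * (k.factorial * b.choose k *
        ((k + ℓ - 1).choose ℓ * (2 ^ (2 * Δ) * Δ.factorial) ^ ℓ *
          (n - b).descFactorial (b - ℓ))) := by
        gcongr
    _ = (n - b).descFactorial (b - ℓ) * (b.choose k) ^ 2 * k.factorial *
        ((k + ℓ - 1).choose ℓ) * (2 ^ (2 * Δ) * Δ.factorial) ^ ℓ := by ring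

end S8

theorem statement8 (b n Δ : ℕ) (hn : b ≤ n)
    (T : SimpleGraph (Fin b)) (hT : T.IsTree)
    (hDeg : ∀ v, (T.neighborSet v).ncard ≤ Δ)
    (Φ₁ : Fin b → Fin n) (hΦ₁ : Function.Injective Φ₁) (ℓ k : ℕ) :
    Nat.card {Φ : Fin b → Fin n // Function.Injective Φ ∧ Compatible T Φ₁ Φ ∧
        (Set.range Φ₁ ∩ Set.range Φ).ncard = ℓ ∧
        Nat.card (T.induce (Φ ⁻¹' (Set.range Φ₁ ∩ Set.range Φ))).ConnectedComponent = k}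
      ≤ (n - b).descFactorial (b - ℓ) * (b.choose k) ^ 2 * k.factorial *
        ((k + ℓ - 1).choose ℓ) * (2 ^ (2 * Δ) * Δ.factorial) ^ ℓ := by
  classical
  have hΔ' : ∀ u, (S8.nbrs T u).length ≤ Δ := fun u => S8.nbrs_length (hDeg u)
  set ST : Type _ := {Φ : Fin b → Fin n // Function.Injective Φ ∧ Compatible T Φ₁ Φ ∧
      (Set.range Φ₁ ∩ Set.range Φ).ncard = ℓ ∧
      Nat.card (T.induce (Φ ⁻¹' (Set.range Φ₁ ∩ Set.range Φ))).ConnectedComponent = k}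
    with hST
  haveI hne : Nonempty (Fin b) := hT.isConnected.nonempty
  -- basic data for each Φ in the family
  set Bs : ST → Set (Fin b) := fun x => x.1 ⁻¹' (Set.range Φ₁ ∩ Set.range x.1) with hBs
  set Bf : ST → Finset (Fin b) := fun x => (Set.toFinite (Bs x)).toFinset with hBf
  set ψf : ST → Fin b → Fin b := fun x v => Function.invFun Φ₁ (x.1 v) with hψf
  have hmemBf : ∀ (x : ST) v, v ∈ Bf x ↔ x.1 v ∈ Set.range Φ₁ ∩ Set.range x.1 := by
    intro x v
    rw [hBf]
    simp only [Set.Finite.mem_toFinset]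
    rfl
  have hBfcard : ∀ x : ST, (Bf x).card = ℓ := by
    intro x
    have h1 : x.1 '' (Bs x) = Set.range Φ₁ ∩ Set.range x.1 :=
      Set.image_preimage_eq_of_subset Set.inter_subset_right
    have h2 : (Bs x).ncard = ℓ := by
      rw [← Set.ncard_image_of_injective (Bs x) x.2.1, h1]
      exact x.2.2.2.1
    rw [hBf]
    exact (Set.ncard_eq_toFinset_card _ _).symm.trans h2
  have hψeq : ∀ (x : ST), ∀ v ∈ Bf x, Φ₁ (ψf x v) = x.1 v := by
    intro x v hv
    exact Function.invFun_eq ((hmemBf x v).mp hv).1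
  -- encode the intersection part
  have encode : ∀ x : ST, ∃ (R : {R : Finset (Fin b) // R.card = k}) (ρ : Fin k ↪ Fin b)
      (fc : Σ f : S8.CompT k (ℓ - k), ∀ i : Fin k, Fin (2 * (f.1 i : ℕ)) → S8.Letter Δ),
      S8.decodeAll T R ρ fc = (Bf x).image (fun v => (v, ψf x v)) := by
    intro x
    apply S8.encode_exists T hΔ' (Bs x) (ψf x) (hBfcard x) x.2.2.2.2
    · intro u hu v hv huv
      have h1 : Φ₁ (ψf x u) = x.1 u := hψeq x u ((Set.Finite.mem_toFinset _).mpr hu)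
      have h2 : Φ₁ (ψf x v) = x.1 v := hψeq x v ((Set.Finite.mem_toFinset _).mpr hv)
      apply x.2.1
      rw [← h1, ← h2, huv]
    · intro u v hu hv hadj
      have h1 : Φ₁ (ψf x u) = x.1 u := hψeq x u ((Set.Finite.mem_toFinset _).mpr hu)
      have h2 : Φ₁ (ψf x v) = x.1 v := hψeq x v ((Set.Finite.mem_toFinset _).mpr hv)
      exact (x.2.2.1 (ψf x u) (ψf x v) u v h1 h2).mpr hadj
  choose Rf ρf fcf hdec using encode
  -- the outside part
  set Rc : Finset (Fin n) := (Finset.univ.image Φ₁)ᶜ with hRcdef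
  have hRc : Rc.card = n - b := by
    rw [hRcdef, Finset.card_compl, Finset.card_image_of_injective _ hΦ₁, Finset.card_univ]
    simp
  have hBc : ∀ x : ST, ((Bf x)ᶜ).card = b - ℓ := by
    intro x
    rw [Finset.card_compl, hBfcard]
    simp
  have houtmem : ∀ (x : ST) v, v ∈ (Bf x)ᶜ → x.1 v ∈ Rc := by
    intro x v hv
    rw [hRcdef, Finset.mem_compl]
    intro hmem
    obtain ⟨a, -, ha⟩ := Finset.mem_image.mp hmem
    apply Finset.mem_compl.mp hv
    rw [hmemBf]
    exact ⟨⟨a, ha⟩, ⟨v, rfl⟩⟩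
  have hout : ∀ x : ST, ∃ o : Fin (b - ℓ) ↪ Fin (n - b),
      ∀ v (hv : v ∈ (Bf x)ᶜ),
        ((Rc.orderIsoOfFin hRc) (o ((((Bf x)ᶜ).orderIsoOfFin (hBc x)).symm ⟨v, hv⟩)) : Fin n)
          = x.1 v := by
    intro x
    refine ⟨⟨fun i => (Rc.orderIsoOfFin hRc).symm
      ⟨x.1 ((((Bf x)ᶜ).orderIsoOfFin (hBc x) i : ((Bf x)ᶜ : Finset (Fin b))) : Fin b),
        houtmem x _ ((((Bf x)ᶜ).orderIsoOfFin (hBc x)) i).2⟩, ?_⟩, ?_⟩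
    · intro i j h
      have h1 := congrArg (fun z => ((Rc.orderIsoOfFin hRc) z : Fin n)) h
      simp only [OrderIso.apply_symm_apply] at h1
      have h2 := x.2.1 h1
      exact (((Bf x)ᶜ).orderIsoOfFin (hBc x)).injective (Subtype.ext h2)
    · intro v hv
      exact (congrArg Subtype.val ((Rc.orderIsoOfFin hRc).apply_symm_apply _)).trans
        (congrArg x.1 (congrArg Subtype.val ((((Bf x)ᶜ).orderIsoOfFin (hBc x)).apply_symm_apply _)))
  choose out hospec using hout
  -- the injection
  set F : ST → S8.Tgt b n Δ ℓ k := fun x => (Rf x, ρf x, fcf x, out x) with hF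
  have hFinj : Function.Injective F := by
    intro x y h
    have h1 : Rf x = Rf y := congrArg (fun t => t.1) h
    have h2 : ρf x = ρf y := congrArg (fun t => t.2.1) h
    have h3 : fcf x = fcf y := congrArg (fun t => t.2.2.1) h
    have h4 : out x = out y := congrArg (fun t => t.2.2.2) h
    have hpairs : (Bf x).image (fun v => (v, ψf x v)) = (Bf y).image (fun v => (v, ψf y v)) := by
      rw [← hdec x, ← hdec y, h1, h2, h3]
    have hBxy : Bf x = Bf y := by
      ext v
      constructor
      · intro hv
        have h5 : (v, ψf x v) ∈ (Bf y).image (fun w => (w, ψf y w)) := by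
          rw [← hpairs]
          exact Finset.mem_image_of_mem _ hv
        obtain ⟨w, hw, hweq⟩ := Finset.mem_image.mp h5
        have : w = v := congrArg Prod.fst hweq
        exact this ▸ hw
      · intro hv
        have h5 : (v, ψf y v) ∈ (Bf x).image (fun w => (w, ψf x w)) := by
          rw [hpairs]
          exact Finset.mem_image_of_mem _ hv
        obtain ⟨w, hw, hweq⟩ := Finset.mem_image.mp h5
        have : w = v := congrArg Prod.fst hweq
        exact this ▸ hw
    have hψxy : ∀ v ∈ Bf x, ψf x v = ψf y v := by
      intro v hv
      have h5 : (v, ψf x v) ∈ (Bf y).image (fun w => (w, ψf y w)) := by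
        rw [← hpairs]
        exact Finset.mem_image_of_mem _ hv
      obtain ⟨w, hw, hweq⟩ := Finset.mem_image.mp h5
      have hw1 : w = v := congrArg Prod.fst hweq
      have hw2 : ψf y w = ψf x v := congrArg Prod.snd hweq
      rw [← hw1] at hw2 ⊢
      exact hw2.symm
    apply Subtype.ext
    funext v
    by_cases hv : v ∈ Bf x
    · calc x.1 v = Φ₁ (ψf x v) := (hψeq x v hv).symm
        _ = Φ₁ (ψf y v) := by rw [hψxy v hv]
        _ = y.1 v := hψeq y v (hBxy ▸ hv)
    · have hvc : v ∈ (Bf x)ᶜ := Finset.mem_compl.mpr hv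
      have hvc' : v ∈ (Bf y)ᶜ := by rw [← hBxy]; exact hvc
      have hcomp : (Bf x)ᶜ = (Bf y)ᶜ := by rw [hBxy]
      have hieq : (((Bf x)ᶜ).orderIsoOfFin (hBc x)).symm ⟨v, hvc⟩
          = (((Bf y)ᶜ).orderIsoOfFin (hBc y)).symm ⟨v, hvc'⟩ :=
        S8.orderIsoSymm_congr hcomp (hBc x) (hBc y) v hvc hvc'
      calc x.1 v
          = ((Rc.orderIsoOfFin hRc)
              (out x ((((Bf x)ᶜ).orderIsoOfFin (hBc x)).symm ⟨v, hvc⟩)) : Fin n) :=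
            (hospec x v hvc).symm
        _ = ((Rc.orderIsoOfFin hRc)
              (out y ((((Bf y)ᶜ).orderIsoOfFin (hBc y)).symm ⟨v, hvc'⟩)) : Fin n) := by
            rw [← hieq, h4]
        _ = y.1 v := hospec y v hvc'
  calc Nat.card ST ≤ Nat.card (S8.Tgt b n Δ ℓ k) := Nat.card_le_card_of_injective F hFinj
    _ ≤ _ := S8.tgt_card_le b n Δ ℓ k
end

section
/- Let p = p(n) satisfy n^{-1/2}(ln n)^{10/9} < p < 1/ln n, set c = np, h = 3·ln ln c/ln c, and b = ⌊(2−h)·(n·ln c)/c⌋. Then (n)_b · p^{b−1} · (1−p)^{binom(b−1,2)} → ∞ as n → ∞. -/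
open Filter

private lemma exp3_ge : (20:ℝ) ≤ Real.exp 3 := by
  have h := Real.exp_one_gt_d9
  have h3 : Real.exp 3 = Real.exp 1 * Real.exp 1 * Real.exp 1 := by
    rw [← Real.exp_add, ← Real.exp_add]; norm_num
  nlinarith

private lemma log20_le : Real.log 20 ≤ 3 := by
  have : Real.log 20 ≤ Real.log (Real.exp 3) :=
    Real.log_le_log (by norm_num) exp3_ge
  rwa [Real.log_exp] at this

private lemma log_le_aux {t : ℝ} (ht : 20 ≤ t) : Real.log t ≤ t / 20 + 2 := by
  have h1 : Real.log (t / 20) ≤ t / 20 - 1 :=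
    Real.log_le_sub_one_of_pos (by linarith)
  have h2 : Real.log (t / 20) = Real.log t - Real.log 20 :=
    Real.log_div (by linarith) (by norm_num)
  have := log20_le
  linarith

private lemma three_log_le {t : ℝ} (ht : 20 ≤ t) : 3 * Real.log t ≤ t := by
  have := log_le_aux ht
  linarith

set_option maxHeartbeats 1000000 in
private lemma key (n : ℕ) (p c h : ℝ) (B : ℕ)
    (hp0 : 0 < p) (hp1 : p ≤ 1/2) (hpln : p * Real.log n ≤ 1)
    (hcnp : c = n * p) (hcbig : Real.exp (Real.exp 3) ≤ c)
    (hcn : Real.log c ≤ Real.log n)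
    (hhdef : h = 3 * Real.log (Real.log c) / Real.log c)
    (hBdef : B = ⌊(2 - h) * ((n:ℝ) * Real.log c) / c⌋₊) :
    Real.exp (Real.log (Real.log c) / 2) ≤
      (n.descFactorial B : ℝ) * p ^ (B - 1) * (1 - p) ^ ((B - 1).choose 2) := by
  have hc0 : (0:ℝ) < c := lt_of_lt_of_le (Real.exp_pos _) hcbig
  set t := Real.log c with htdef
  set L := Real.log t with hLdef
  have ht3 : Real.exp 3 ≤ t := by
    have : Real.log (Real.exp (Real.exp 3)) ≤ Real.log c :=
      Real.log_le_log (Real.exp_pos _) hcbig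
    rwa [Real.log_exp] at this
  have ht20 : (20:ℝ) ≤ t := le_trans exp3_ge ht3
  have ht0 : (0:ℝ) < t := by linarith only [ht20]
  have hL3 : (3:ℝ) ≤ L := by
    have : Real.log (Real.exp 3) ≤ Real.log t := Real.log_le_log (Real.exp_pos _) ht3
    rwa [Real.log_exp] at this
  have hL0 : (0:ℝ) < L := by linarith only [hL3]
  have hht : h * t = 3 * L := by
    rw [hhdef]; field_simp
  have hh0 : 0 ≤ h := by
    rw [hhdef]
    have := hL0
    positivity
  have hh1 : h ≤ 1 := by
    rw [hhdef, div_le_one ht0]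
    exact three_log_le ht20
  have hn0 : (0:ℝ) < (n:ℝ) := by
    nlinarith only [hc0, hp0, hcnp, Nat.cast_nonneg (α := ℝ) n]
  have hp1' : p ≤ 1 := by linarith only [hp1]
  -- x facts
  set x := (2 - h) * ((n:ℝ) * t) / c with hxdef
  have hxp : x * p = (2 - h) * t := by
    rw [hxdef, hcnp]; field_simp
  have hxt : t ≤ x := by
    have h1 : t * p ≤ x * p := by
      rw [hxp]
      have h2 : t * p ≤ t * (2 - h) := by
        apply mul_le_mul_of_nonneg_left _ ht0.le
        linarith only [hp1', hh1]
      linarith only [h2]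
    exact le_of_mul_le_mul_right h1 hp0
  have hx0 : (0:ℝ) ≤ x := by linarith only [hxt, ht0]
  have hBx : (B:ℝ) ≤ x := by rw [hBdef]; exact Nat.floor_le hx0
  have hB1 : 1 ≤ B := by
    rw [hBdef]
    refine Nat.le_floor ?_
    push_cast
    linarith only [hxt, ht20]
  have hB0 : (1:ℝ) ≤ (B:ℝ) := by exact_mod_cast hB1
  have hBp : (B:ℝ) * p ≤ 2 * t - 3 * L := by
    have h1 : (B:ℝ) * p ≤ x * p := mul_le_mul_of_nonneg_right hBx hp0.le
    rw [hxp] at h1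
    linarith only [h1, hht]
  -- size bounds on c and B
  have hc27 : (27:ℝ) ≤ c := by
    have e2 : (3:ℝ) ≤ Real.exp 2 := by linarith only [Real.add_one_le_exp (2:ℝ)]
    have e6 : Real.exp 6 = Real.exp 2 * Real.exp 2 * Real.exp 2 := by
      rw [← Real.exp_add, ← Real.exp_add]; norm_num
    have h27 : (27:ℝ) ≤ Real.exp 6 := by nlinarith only [e2, e6, Real.exp_pos (2:ℝ)]
    have h620 : Real.exp 6 ≤ Real.exp 20 := Real.exp_le_exp.2 (by norm_num)
    have h20e3 : Real.exp 20 ≤ Real.exp (Real.exp 3) := Real.exp_le_exp.2 exp3_ge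
    linarith only [h27, h620, h20e3, hcbig]
  have h4t : 4 * t ≤ c / 2 := by
    have h1 := log_le_aux (t := c) (by linarith only [hc27])
    rw [← htdef] at h1
    linarith only [h1, hc27]
  have hxn2 : x ≤ (n:ℝ) / 2 := by
    have hnp : (n:ℝ) * p = c := hcnp.symm
    have h1 : x * p ≤ (n:ℝ) / 2 * p := by
      rw [hxp]
      linarith only [mul_nonneg hh0 ht0.le, h4t, hc0, hnp, ht0]
    exact le_of_mul_le_mul_right h1 hp0
  have hBn2 : (B:ℝ) ≤ (n:ℝ) / 2 := le_trans hBx hxn2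
  have hBn : B ≤ n := by
    have : (B:ℝ) ≤ (n:ℝ) := by linarith only [hBn2, hn0]
    exact_mod_cast this
  have hn2 : (2:ℝ) ≤ (n:ℝ) := by
    have h1 : (n:ℝ) * p ≤ (n:ℝ) * (1/2) := mul_le_mul_of_nonneg_left hp1 hn0.le
    linarith only [h1, hcnp, hc27]
  -- descFactorial lower bound
  set m : ℝ := ((n + 1 - B : ℕ):ℝ) with hmdef
  have hmcast : m = (n:ℝ) + 1 - (B:ℝ) := by
    rw [hmdef, Nat.cast_sub (by omega)]
    push_cast
    ring
  have hmn2 : (n:ℝ) / 2 ≤ m := by rw [hmcast]; linarith only [hBn2]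
  have hm0 : (0:ℝ) < m := by linarith only [hmn2, hn0]
  set D := n.descFactorial B with hDdef
  have hDlb : m ^ B ≤ (D:ℝ) := by
    rw [hmdef]
    exact_mod_cast Nat.pow_sub_le_descFactorial n B
  have hD0 : (0:ℝ) < (D:ℝ) := lt_of_lt_of_le (by positivity) hDlb
  have h1p0 : (0:ℝ) < 1 - p := by linarith only [hp1]
  set K := (B - 1).choose 2 with hKdef
  have hF0 : (0:ℝ) < (D:ℝ) * p ^ (B - 1) * (1 - p) ^ K := by positivity
  have hlogF : Real.log ((D:ℝ) * p ^ (B - 1) * (1 - p) ^ K)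
      = Real.log D + ((B - 1 : ℕ):ℝ) * Real.log p + (K:ℝ) * Real.log (1 - p) := by
    rw [Real.log_mul (by positivity) (by positivity),
        Real.log_mul (by positivity) (by positivity),
        Real.log_pow, Real.log_pow]
  have hlogD : (B:ℝ) * Real.log m ≤ Real.log D := by
    have h1 : Real.log (m ^ B) ≤ Real.log D := Real.log_le_log (by positivity) hDlb
    rwa [Real.log_pow] at h1
  have hlogp_neg : Real.log p < 0 := Real.log_neg hp0 (by linarith only [hp1])
  have hBm1cast : ((B - 1 : ℕ):ℝ) ≤ (B:ℝ) := by exact_mod_cast Nat.sub_le B 1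
  have hlogp : (B:ℝ) * Real.log p ≤ ((B - 1 : ℕ):ℝ) * Real.log p :=
    mul_le_mul_of_nonpos_right hBm1cast hlogp_neg.le
  have hlog1p_neg : Real.log (1 - p) < 0 :=
    Real.log_neg h1p0 (by linarith only [hp0])
  have hlog1p : -(p + 2 * p ^ 2) ≤ Real.log (1 - p) := by
    have h1 : Real.log (1 - p)⁻¹ ≤ (1 - p)⁻¹ - 1 :=
      Real.log_le_sub_one_of_pos (by positivity)
    rw [Real.log_inv] at h1
    have h2 : (1 - p)⁻¹ - 1 = p / (1 - p) := by field_simp; ring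
    rw [h2] at h1
    have h3 : p / (1 - p) ≤ p + 2 * p ^ 2 := by
      rw [div_le_iff₀ h1p0]
      have h4 : (0:ℝ) ≤ p^2 * (1 - 2*p) :=
        mul_nonneg (sq_nonneg p) (by linarith only [hp1])
      nlinarith only [h4]
    linarith only [h1, h3]
  have hK2 : (K:ℝ) ≤ (B:ℝ) * (B:ℝ) / 2 := by
    have hnat : K * 2 ≤ B * B := by
      rw [hKdef, Nat.choose_two_right]
      calc (B - 1) * (B - 1 - 1) / 2 * 2 ≤ (B - 1) * (B - 1 - 1) :=
        Nat.div_mul_le_self _ 2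
      _ ≤ B * B := Nat.mul_le_mul (by omega) (by omega)
    have h1 : ((K * 2 : ℕ):ℝ) ≤ ((B * B : ℕ):ℝ) := by exact_mod_cast hnat
    push_cast at h1
    linarith only [h1]
  have hKlog : ((B:ℝ) * (B:ℝ) / 2) * Real.log (1 - p) ≤ (K:ℝ) * Real.log (1 - p) :=
    mul_le_mul_of_nonpos_right hK2 hlog1p_neg.le
  have hKlog2 : -(((B:ℝ) * (B:ℝ) / 2) * (p + 2 * p ^ 2)) ≤ (K:ℝ) * Real.log (1 - p) := by
    have h1 : ((B:ℝ) * (B:ℝ) / 2) * (-(p + 2 * p ^ 2))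
        ≤ ((B:ℝ) * (B:ℝ) / 2) * Real.log (1 - p) :=
      mul_le_mul_of_nonneg_left hlog1p (by positivity)
    nlinarith only [h1, hKlog]
  have hmp : c / 2 ≤ m * p := by
    have h1 : (n:ℝ) / 2 * p ≤ m * p := mul_le_mul_of_nonneg_right hmn2 hp0.le
    rw [hcnp]
    linarith only [h1]
  have hlogmp : t - Real.log 2 ≤ Real.log m + Real.log p := by
    have h1 : Real.log (c / 2) ≤ Real.log (m * p) :=
      Real.log_le_log (by positivity) hmp
    rw [Real.log_div (by positivity) (by norm_num),
        Real.log_mul (by positivity) (by positivity)] at h1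
    exact h1
  have hlog2 : Real.log 2 ≤ 1 := by
    have := Real.log_two_lt_d9
    linarith only [this]
  have htp : t * p ≤ 1 := by
    have h1 : t * p ≤ Real.log n * p := mul_le_mul_of_nonneg_right hcn hp0.le
    linarith only [h1, hpln]
  have hB2p2 : (B:ℝ) * (B:ℝ) * (p * p) ≤ 2 * (B:ℝ) := by
    have hBp0 : (0:ℝ) ≤ (B:ℝ) * p := by positivity
    have h1 : ((B:ℝ) * p) * ((B:ℝ) * p) ≤ ((B:ℝ) * p) * (2 * t) := by
      apply mul_le_mul_of_nonneg_left _ hBp0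
      linarith only [hBp, hL0]
    have h3 : (B:ℝ) * (t * p) ≤ (B:ℝ) * 1 :=
      mul_le_mul_of_nonneg_left htp (by positivity)
    nlinarith only [h1, h3]
  have hB2p : (B:ℝ) * (B:ℝ) / 2 * p ≤ (B:ℝ) * (2 * t - 3 * L) / 2 := by
    have h1 : (B:ℝ) * ((B:ℝ) * p) ≤ (B:ℝ) * (2 * t - 3 * L) :=
      mul_le_mul_of_nonneg_left hBp (by positivity)
    nlinarith only [h1]
  have hmain : L / 2 ≤ Real.log ((D:ℝ) * p ^ (B - 1) * (1 - p) ^ K) := by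
    rw [hlogF]
    have s1 : (B:ℝ) * (t - Real.log 2) ≤ (B:ℝ) * Real.log m + (B:ℝ) * Real.log p := by
      have h1 : (B:ℝ) * (t - Real.log 2) ≤ (B:ℝ) * (Real.log m + Real.log p) :=
        mul_le_mul_of_nonneg_left hlogmp (by positivity)
      nlinarith only [h1]
    have s2 : (B:ℝ) * (t - Real.log 2) - ((B:ℝ) * (B:ℝ) / 2) * (p + 2 * p ^ 2)
        ≤ Real.log D + ((B - 1 : ℕ):ℝ) * Real.log p + (K:ℝ) * Real.log (1 - p) := by
      linarith only [s1, hlogD, hlogp, hKlog2]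
    have s3 : (B:ℝ) * (L / 2)
        ≤ (B:ℝ) * (t - Real.log 2) - ((B:ℝ) * (B:ℝ) / 2) * (p + 2 * p ^ 2) := by
      have e3 : (B:ℝ) * (L / 2) ≤ (B:ℝ) * (3 / 2 * L - Real.log 2 - 2) := by
        apply mul_le_mul_of_nonneg_left _ (by linarith only [hB0])
        linarith only [hL3, hlog2]
      nlinarith only [e3, hB2p, hB2p2]
    have s4 : L / 2 ≤ (B:ℝ) * (L / 2) := by
      have h1 : (0:ℝ) ≤ ((B:ℝ) - 1) * (L / 2) :=
        mul_nonneg (by linarith only [hB0]) (by linarith only [hL0])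
      nlinarith only [h1]
    linarith only [s2, s3, s4]
  calc Real.exp (L / 2) ≤ Real.exp (Real.log ((D:ℝ) * p ^ (B - 1) * (1 - p) ^ K)) :=
        Real.exp_le_exp.2 hmain
  _ = (D:ℝ) * p ^ (B - 1) * (1 - p) ^ K := Real.exp_log hF0

theorem statement9 (p : ℕ → ℝ)
    (hp : ∀ᶠ n : ℕ in atTop,
      (n : ℝ) ^ (-(1 : ℝ)/2) * Real.log n ^ ((10 : ℝ)/9) < p n ∧ p n < 1 / Real.log n)
    (c h : ℕ → ℝ)
    (hc : ∀ n, c n = n * p n)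
    (hh : ∀ n, h n = 3 * Real.log (Real.log (c n)) / Real.log (c n))
    (B : ℕ → ℕ)
    (hB : ∀ n, B n = ⌊(2 - h n) * ((n : ℝ) * Real.log (c n)) / c n⌋₊) :
    Tendsto (fun n => (n.descFactorial (B n) : ℝ) * p n ^ (B n - 1) *
      (1 - p n) ^ ((B n - 1).choose 2)) atTop atTop := by
  have hev2 : ∀ᶠ n : ℕ in atTop, Real.exp 2 ≤ (n:ℝ) :=
    tendsto_natCast_atTop_atTop.eventually_ge_atTop _
  have hbase : ∀ᶠ n : ℕ in atTop,
      0 < p n ∧ p n ≤ 1/2 ∧ p n * Real.log n ≤ 1 ∧ (n:ℝ) ^ ((1:ℝ)/2) ≤ c n := by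
    filter_upwards [hp, hev2, eventually_gt_atTop 0] with n hpn hn2 hn0
    have hn0' : (0:ℝ) < (n:ℝ) := by exact_mod_cast hn0
    have hlogn : (2:ℝ) ≤ Real.log n := by
      have : Real.log (Real.exp 2) ≤ Real.log n := Real.log_le_log (Real.exp_pos _) hn2
      rwa [Real.log_exp] at this
    have hlogn0 : (0:ℝ) < Real.log n := by linarith only [hlogn]
    have hlow : (0:ℝ) < (n : ℝ) ^ (-(1 : ℝ)/2) * Real.log n ^ ((10 : ℝ)/9) :=
      mul_pos (Real.rpow_pos_of_pos hn0' _) (Real.rpow_pos_of_pos hlogn0 _)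
    have hp0 : 0 < p n := lt_trans hlow hpn.1
    have hp12 : p n ≤ 1/2 := by
      have h1 : p n < 1 / Real.log n := hpn.2
      have h2 : 1 / Real.log n ≤ 1/2 := by
        rw [div_le_div_iff₀ hlogn0 (by norm_num)]
        linarith only [hlogn]
      linarith only [h1, h2]
    have hpl : p n * Real.log n ≤ 1 := by
      have := (lt_div_iff₀ hlogn0).1 hpn.2
      linarith only [this]
    refine ⟨hp0, hp12, hpl, ?_⟩
    have hq1 : (1:ℝ) ≤ Real.log n ^ ((10 : ℝ)/9) :=
      Real.one_le_rpow (by linarith only [hlogn]) (by norm_num)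
    have hr0 : (0:ℝ) < (n : ℝ) ^ (-(1 : ℝ)/2) := Real.rpow_pos_of_pos hn0' _
    have step : (n : ℝ) ^ (-(1 : ℝ)/2)
        ≤ (n : ℝ) ^ (-(1 : ℝ)/2) * Real.log n ^ ((10 : ℝ)/9) := by
      have := mul_le_mul_of_nonneg_left hq1 hr0.le
      linarith only [this]
    have hc1 : (n:ℝ) * (n : ℝ) ^ (-(1 : ℝ)/2) ≤ c n := by
      rw [hc n]
      exact mul_le_mul_of_nonneg_left (le_of_lt (lt_of_le_of_lt step hpn.1)) hn0'.le
    have hc2 : (n:ℝ) ^ ((1:ℝ)/2) = (n:ℝ) * (n : ℝ) ^ (-(1 : ℝ)/2) := by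
      rw [show (1:ℝ)/2 = 1 + (-(1:ℝ)/2) by norm_num, Real.rpow_add hn0', Real.rpow_one]
    rw [hc2]
    exact hc1
  have hctend : Tendsto c atTop atTop := by
    apply tendsto_atTop_mono' atTop (hbase.mono fun n hn => hn.2.2.2)
    exact (tendsto_rpow_atTop (by norm_num : (0:ℝ) < 1/2)).comp tendsto_natCast_atTop_atTop
  have hcbig : ∀ᶠ n : ℕ in atTop, Real.exp (Real.exp 3) ≤ c n :=
    hctend.eventually_ge_atTop _
  have hG : Tendsto (fun n => Real.exp (Real.log (Real.log (c n)) / 2)) atTop atTop := by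
    apply Real.tendsto_exp_atTop.comp
    exact (Real.tendsto_log_atTop.comp (Real.tendsto_log_atTop.comp hctend)).atTop_div_const
      (by norm_num)
  apply tendsto_atTop_mono' atTop _ hG
  filter_upwards [hbase, hcbig] with n hn hcb
  obtain ⟨hp0, hp12, hpl, -⟩ := hn
  have hcn : Real.log (c n) ≤ Real.log n := by
    have hc0 : (0:ℝ) < c n := lt_of_lt_of_le (Real.exp_pos _) hcb
    apply Real.log_le_log hc0
    rw [hc n]
    have hn0' : (0:ℝ) ≤ (n:ℝ) := Nat.cast_nonneg n
    nlinarith only [hn0', hp12]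
  exact key n (p n) (c n) (h n) (B n) hp0 hp12 hpl (hc n) hcb hcn (hh n) (hB n)
end

section
/- Let p = p(n) satisfy n^{-1/2}(ln n)^{10/9} < p < 1/ln n, set c = np, h = 3·ln ln c/ln c, and b = ⌊(2−h)·(n·ln c)/c⌋. Then for all sufficiently large n and every integer ℓ with 1 ≤ ℓ ≤ b: (n−b)_{b−ℓ}/(n)_{b} < (6/n)^{ℓ} · e^{−b²/n} < (6/n)^{ℓ}. -/
open Filter Finset

lemma exp_half_lt_three' : Real.exp (1/2) < 3 := by
  have h : Real.exp (1/2) * Real.exp (1/2) = Real.exp 1 := by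
    rw [← Real.exp_add]; norm_num
  nlinarith [Real.exp_pos (1/2 : ℝ), Real.exp_one_lt_d9]

lemma core12 (n b ℓ : ℕ) (hn : 0 < n) (hℓ1 : 1 ≤ ℓ) (hℓb : ℓ ≤ b)
    (hb : (b : ℝ) ≤ n / 2) :
    ((n - b).descFactorial (b - ℓ) : ℝ) / (n.descFactorial b : ℝ)
      < (6 / n : ℝ) ^ ℓ * Real.exp (-(b : ℝ) ^ 2 / n) := by
  have hn0 : (0:ℝ) < n := by exact_mod_cast hn
  have h2b : 2 * b ≤ n := by
    have : ((2 * b : ℕ) : ℝ) ≤ n := by push_cast; linarith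
    exact_mod_cast this
  have hbn : b ≤ n := by omega
  have hnum : ((n - b).descFactorial (b - ℓ) : ℝ)
      = ∏ i ∈ range (b - ℓ), ((n:ℝ) - b - i) := by
    rw [Nat.descFactorial_eq_prod_range, Nat.cast_prod]
    refine Finset.prod_congr rfl fun i hi => ?_
    have hi' : i < b - ℓ := Finset.mem_range.mp hi
    rw [Nat.cast_sub (by omega), Nat.cast_sub hbn]
  have hden : ((n.descFactorial b : ℕ) : ℝ) = ∏ i ∈ range b, ((n:ℝ) - i) := by
    rw [Nat.descFactorial_eq_prod_range, Nat.cast_prod]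
    refine Finset.prod_congr rfl fun i hi => ?_
    have hi' : i < b := Finset.mem_range.mp hi
    rw [Nat.cast_sub (by omega)]
  have hden_pos : (0:ℝ) < ∏ i ∈ range b, ((n:ℝ) - i) := by
    refine Finset.prod_pos fun i hi => ?_
    have hi' : i < b := Finset.mem_range.mp hi
    have : (i:ℝ) < b := by exact_mod_cast hi'
    linarith
  have hsplit : (∏ i ∈ range (b-ℓ), ((n:ℝ)-i)) * (∏ i ∈ Ico (b-ℓ) b, ((n:ℝ)-i))
      = ∏ i ∈ range b, ((n:ℝ)-i) := by
    rw [Finset.range_eq_Ico, Finset.range_eq_Ico]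
    exact Finset.prod_Ico_consecutive (fun i : ℕ => (n:ℝ)-i) (Nat.zero_le _) (Nat.sub_le b ℓ)
  set Plow := ∏ i ∈ range (b-ℓ), ((n:ℝ)-i) with hPlow
  set Phi := ∏ i ∈ Ico (b-ℓ) b, ((n:ℝ)-i) with hPhi
  have hPlow_pos : 0 < Plow := by
    refine Finset.prod_pos fun i hi => ?_
    have hi' : i < b - ℓ := Finset.mem_range.mp hi
    have : (i:ℝ) < b := by exact_mod_cast (by omega : i < b)
    linarith
  have hPhi_ge : ((n:ℝ)/2)^ℓ ≤ Phi := by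
    have hcard : (Ico (b-ℓ) b).card = ℓ := by rw [Nat.card_Ico]; omega
    calc ((n:ℝ)/2)^ℓ = ∏ _i ∈ Ico (b-ℓ) b, ((n:ℝ)/2) := by
          rw [Finset.prod_const, hcard]
      _ ≤ Phi := by
          refine Finset.prod_le_prod (fun i _ => by positivity) (fun i hi => ?_)
          have hi' : i < b := (Finset.mem_Ico.mp hi).2
          have : (i:ℝ) < b := by exact_mod_cast hi'
          linarith
  have hnum_le : (∏ i ∈ range (b-ℓ), ((n:ℝ) - b - i))
      ≤ Plow * Real.exp (-(b:ℝ)/n) ^ (b - ℓ) := by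
    rw [show Plow * Real.exp (-(b:ℝ)/n)^(b-ℓ)
        = ∏ i ∈ range (b-ℓ), (((n:ℝ)-i) * Real.exp (-(b:ℝ)/n)) from by
      rw [Finset.prod_mul_distrib, Finset.prod_const, card_range]]
    refine Finset.prod_le_prod (fun i hi => ?_) (fun i hi => ?_)
    · have hi' : i < b - ℓ := Finset.mem_range.mp hi
      have h1 : b + i ≤ n := by omega
      have : ((b:ℝ) + i) ≤ n := by exact_mod_cast h1
      linarith
    · have hi' : i < b - ℓ := Finset.mem_range.mp hi
      have hni : (0:ℝ) ≤ (n:ℝ) - i := by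
        have : (i:ℝ) < b := by exact_mod_cast (by omega : i < b)
        linarith
      have h1 : (1:ℝ) - b/n ≤ Real.exp (-(b:ℝ)/n) := by
        have h := Real.add_one_le_exp (-(b:ℝ)/n)
        have hnd : -(b:ℝ)/(n:ℝ) = -((b:ℝ)/(n:ℝ)) := neg_div _ _
        linarith
      have key : ((n:ℝ)-i)*(1-(b:ℝ)/n) - ((n:ℝ)-b-i) = (b:ℝ)*i/n := by
        field_simp; ring
      have hbi : (0:ℝ) ≤ (b:ℝ)*i/n := by positivity
      calc (n:ℝ)-b-i ≤ ((n:ℝ)-i)*(1-(b:ℝ)/n) := by linarith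
        _ ≤ ((n:ℝ)-i)*Real.exp (-(b:ℝ)/n) := mul_le_mul_of_nonneg_left h1 hni
  have hE : Real.exp (-(b:ℝ)/n) ^ (b-ℓ)
      = Real.exp (-(b:ℝ)^2/n) * Real.exp ((ℓ:ℝ)*b/n) := by
    rw [← Real.exp_nat_mul, ← Real.exp_add]
    congr 1
    rw [Nat.cast_sub hℓb]
    field_simp
    ring
  have hbn2 : (b:ℝ)/n ≤ 1/2 := by rw [div_le_iff₀ hn0]; linarith
  have hexp_lt : Real.exp ((ℓ:ℝ)*b/n) < 3^ℓ := by
    have h1 : (ℓ:ℝ)*b/n ≤ (ℓ:ℝ)*(1/2) := by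
      calc (ℓ:ℝ)*b/n = (ℓ:ℝ) * ((b:ℝ)/n) := by ring
        _ ≤ (ℓ:ℝ)*(1/2) := mul_le_mul_of_nonneg_left hbn2 (Nat.cast_nonneg ℓ)
    calc Real.exp ((ℓ:ℝ)*b/n) ≤ Real.exp ((ℓ:ℝ)*(1/2)) := Real.exp_le_exp.mpr h1
      _ = Real.exp (1/2) ^ ℓ := by rw [← Real.exp_nat_mul]
      _ < 3^ℓ := pow_lt_pow_left₀ exp_half_lt_three' (Real.exp_pos _).le (by omega)
  have h3 : (3:ℝ)^ℓ = ((n:ℝ)/2)^ℓ * (6/(n:ℝ))^ℓ := by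
    rw [← mul_pow]
    congr 1
    field_simp
    ring
  rw [hnum, hden, div_lt_iff₀ hden_pos, ← hsplit]
  calc (∏ i ∈ range (b-ℓ), ((n:ℝ) - b - i))
      ≤ Plow * Real.exp (-(b:ℝ)/n) ^ (b - ℓ) := hnum_le
    _ = Plow * Real.exp (-(b:ℝ)^2/n) * Real.exp ((ℓ:ℝ)*b/n) := by rw [hE]; ring
    _ < Plow * Real.exp (-(b:ℝ)^2/n) * 3^ℓ := by
        exact mul_lt_mul_of_pos_left hexp_lt (mul_pos hPlow_pos (Real.exp_pos _))
    _ = Plow * Real.exp (-(b:ℝ)^2/n) * (((n:ℝ)/2)^ℓ * (6/(n:ℝ))^ℓ) := by rw [← h3]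
    _ ≤ Plow * Real.exp (-(b:ℝ)^2/n) * (Phi * (6/(n:ℝ))^ℓ) := by
        refine mul_le_mul_of_nonneg_left ?_ (mul_pos hPlow_pos (Real.exp_pos _)).le
        exact mul_le_mul_of_nonneg_right hPhi_ge (by positivity)
    _ = (6/(n:ℝ))^ℓ * Real.exp (-(b:ℝ)^2/n) * (Plow * Phi) := by ring

set_option maxHeartbeats 1000000 in
theorem statement12 (p : ℕ → ℝ)
    (hp : ∀ᶠ n : ℕ in atTop,
      (n : ℝ) ^ (-(1 : ℝ)/2) * Real.log n ^ ((10 : ℝ)/9) < p n ∧ p n < 1 / Real.log n)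
    (c h : ℕ → ℝ)
    (hc : ∀ n, c n = n * p n)
    (hh : ∀ n, h n = 3 * Real.log (Real.log (c n)) / Real.log (c n))
    (B : ℕ → ℕ)
    (hB : ∀ n, B n = ⌊(2 - h n) * ((n : ℝ) * Real.log (c n)) / c n⌋₊) :
    ∀ᶠ n : ℕ in atTop, ∀ ℓ : ℕ, 1 ≤ ℓ → ℓ ≤ B n →
      ((n - B n).descFactorial (B n - ℓ) : ℝ) / (n.descFactorial (B n) : ℝ)
          < (6 / n : ℝ) ^ ℓ * Real.exp (-(B n : ℝ) ^ 2 / n) ∧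
        (6 / n : ℝ) ^ ℓ * Real.exp (-(B n : ℝ) ^ 2 / n) < (6 / n : ℝ) ^ ℓ := by
  filter_upwards [hp, eventually_ge_atTop 65536] with n hpn hn
  obtain ⟨hp_lb, hp_ub⟩ := hpn
  have hnpos : 0 < n := by omega
  have hn0 : (0:ℝ) < n := by exact_mod_cast hnpos
  have hnR : (65536:ℝ) ≤ n := by exact_mod_cast hn
  have hlogn1 : 1 ≤ Real.log n := by
    rw [Real.le_log_iff_exp_le hn0]
    calc Real.exp 1 ≤ 2.7182818286 := Real.exp_one_lt_d9.le
      _ ≤ n := by linarith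
  have hL1 : (1:ℝ) ≤ Real.log n ^ ((10:ℝ)/9) := Real.one_le_rpow hlogn1 (by norm_num)
  have hs_pos : 0 < Real.sqrt n := Real.sqrt_pos.mpr hn0
  have hs : Real.sqrt n * Real.sqrt n = n := Real.mul_self_sqrt hn0.le
  have hrp : (n:ℝ) ^ (-(1:ℝ)/2) * n = Real.sqrt n := by
    have h1 : (n:ℝ) ^ (-(1:ℝ)/2) * (n:ℝ)^(1:ℝ) = (n:ℝ)^((1:ℝ)/2) := by
      rw [← Real.rpow_add hn0]; norm_num
    rw [Real.rpow_one] at h1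
    rw [h1, Real.sqrt_eq_rpow]
  have hc_gt : Real.sqrt n < c n := by
    rw [hc]
    have h2 : Real.sqrt n ≤ n * ((n:ℝ)^(-(1:ℝ)/2) * Real.log n ^ ((10:ℝ)/9)) := by
      calc Real.sqrt n = Real.sqrt n * 1 := (mul_one _).symm
        _ ≤ Real.sqrt n * Real.log n ^ ((10:ℝ)/9) :=
            mul_le_mul_of_nonneg_left hL1 hs_pos.le
        _ = n * ((n:ℝ)^(-(1:ℝ)/2) * Real.log n ^ ((10:ℝ)/9)) := by rw [← hrp]; ring
    calc Real.sqrt n ≤ n * ((n:ℝ)^(-(1:ℝ)/2) * Real.log n ^ ((10:ℝ)/9)) := h2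
      _ < n * p n := mul_lt_mul_of_pos_left hp_lb hn0
  have hc_pos : 0 < c n := lt_trans hs_pos hc_gt
  have h256 : (256:ℝ) ≤ Real.sqrt n := by
    rw [Real.le_sqrt (by norm_num) hn0.le]
    norm_num
    linarith
  have hc_le_n : c n ≤ n := by
    rw [hc]
    have hp1 : p n ≤ 1 := by
      refine hp_ub.le.trans ?_
      rw [div_le_one (by linarith : (0:ℝ) < Real.log n)]
      exact hlogn1
    nlinarith
  have hlogc1 : 1 ≤ Real.log (c n) := by
    rw [Real.le_log_iff_exp_le hc_pos]
    calc Real.exp 1 ≤ 2.7182818286 := Real.exp_one_lt_d9.le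
      _ ≤ c n := by linarith
  have hlogc_pos : (0:ℝ) < Real.log (c n) := by linarith
  have hh0 : 0 ≤ h n := by
    rw [hh]
    exact div_nonneg (mul_nonneg (by norm_num) (Real.log_nonneg hlogc1)) hlogc_pos.le
  have hBle : (B n : ℝ) ≤ 2 * ((n:ℝ) * Real.log (c n)) / c n := by
    rw [hB]
    rcases le_or_gt 0 ((2 - h n) * ((n : ℝ) * Real.log (c n)) / c n) with hv | hv
    · refine (Nat.floor_le hv).trans ?_
      rw [div_le_div_iff_of_pos_right hc_pos]
      have hX : (0:ℝ) ≤ (n:ℝ) * Real.log (c n) := mul_nonneg hn0.le hlogc_pos.le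
      nlinarith
    · rw [Nat.floor_of_nonpos hv.le]
      push_cast
      exact div_nonneg (mul_nonneg (by norm_num) (mul_nonneg hn0.le hlogc_pos.le)) hc_pos.le
  have hstep : 2 * ((n:ℝ) * Real.log (c n)) / c n ≤ 2 * Real.sqrt n * Real.log n := by
    have hlogcn : Real.log (c n) ≤ Real.log n := Real.log_le_log hc_pos hc_le_n
    have h1 : 2 * ((n:ℝ) * Real.log (c n)) / c n ≤ 2 * ((n:ℝ) * Real.log n) / c n := by
      rw [div_le_div_iff_of_pos_right hc_pos]
      nlinarith
    have h2 : 2 * ((n:ℝ) * Real.log n) / c n ≤ 2 * ((n:ℝ) * Real.log n) / Real.sqrt n :=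
      div_le_div_of_nonneg_left (by nlinarith) hs_pos hc_gt.le
    have h3 : 2 * ((n:ℝ) * Real.log n) / Real.sqrt n = 2 * Real.sqrt n * Real.log n := by
      rw [eq_comm, eq_div_iff hs_pos.ne']
      linear_combination (2 * Real.log n) * hs
    linarith
  have hfinal : 2 * Real.sqrt n * Real.log n ≤ (n:ℝ)/2 := by
    set s := Real.sqrt n with hsdef
    set q := Real.sqrt s with hqdef
    have hq2 : q * q = s := Real.mul_self_sqrt hs_pos.le
    have hq16 : 16 ≤ q := by
      rw [hqdef, Real.le_sqrt (by norm_num) hs_pos.le]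
      norm_num
      linarith
    have hqpos : (0:ℝ) < q := by linarith
    have hn_eq : (n:ℝ) = q^4 := by nlinarith [hs, hq2]
    have hlogq : Real.log q ≤ q - 1 := Real.log_le_sub_one_of_pos hqpos
    have hlogn_eq : Real.log n = 4 * Real.log q := by
      rw [hn_eq, show (q:ℝ)^4 = q^(4:ℕ) from rfl, Real.log_pow]
      push_cast; ring
    rw [hlogn_eq, hn_eq, ← hq2]
    nlinarith [mul_le_mul_of_nonneg_left hlogq (by positivity : (0:ℝ) ≤ 8*(q*q)),
      mul_nonneg (mul_nonneg (mul_nonneg hqpos.le hqpos.le) hqpos.le)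
        (by linarith : (0:ℝ) ≤ q - 16)]
  have hb : ((B n : ℕ) : ℝ) ≤ (n:ℝ)/2 := by linarith
  intro ℓ hℓ1 hℓ2
  refine ⟨core12 n (B n) ℓ hnpos hℓ1 hℓ2 hb, ?_⟩
  have h6 : (0:ℝ) < (6/(n:ℝ))^ℓ := by positivity
  have hBpos : 1 ≤ B n := le_trans hℓ1 hℓ2
  have hBR : (1:ℝ) ≤ (B n : ℝ) := by exact_mod_cast hBpos
  have hexp1 : Real.exp (-(B n : ℝ)^2/n) < 1 := by
    rw [Real.exp_lt_one_iff]
    have : (0:ℝ) < (B n : ℝ)^2 := by nlinarith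
    apply div_neg_of_neg_of_pos <;> [linarith; exact hn0]
  calc (6/(n:ℝ))^ℓ * Real.exp (-(B n : ℝ)^2/n) < (6/(n:ℝ))^ℓ * 1 :=
        mul_lt_mul_of_pos_left hexp1 h6
    _ = (6/(n:ℝ))^ℓ := mul_one _
end

section
/- Let p = p(n) satisfy n^{-1/2}(ln n)^{10/9} < p < 1/ln n, set c = np, h = 3·ln ln c/ln c, and b = ⌊(2−h)·(n·ln c)/c⌋. Then for all sufficiently large n and every integer ℓ with 1 ≤ ℓ ≤ b: ((n−b)_{b−ℓ}/(n)_{b}) · p^{−ℓ} · (1−p)^{ℓ − binom(ℓ,2)} < 6^{ℓ} · c^{−ℓ + (1 + 1/ln n)·c·binom(ℓ,2)/(n·ln c)}. -/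
open Filter

private lemma floor_cast_le {x y : ℝ} (hy : 0 ≤ y) (h : x ≤ y) : (⌊x⌋₊ : ℝ) ≤ y := by
  rcases le_or_gt 0 x with h0 | h0
  · exact (Nat.floor_le h0).trans h
  · rw [Nat.floor_of_nonpos h0.le]; simpa using hy

private lemma log_le_div12 {x : ℝ} (hx : 576 ≤ x) : Real.log x ≤ x / 12 := by
  have hx0 : (0 : ℝ) < x := by linarith
  have hs : Real.sqrt x ^ 2 = x := Real.sq_sqrt hx0.le
  have hs0 : 0 ≤ Real.sqrt x := Real.sqrt_nonneg x
  have hs24 : (24 : ℝ) ≤ Real.sqrt x := by nlinarith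
  have h1 : Real.log (Real.sqrt x) ≤ Real.sqrt x - 1 :=
    Real.log_le_sub_one_of_pos (Real.sqrt_pos.mpr hx0)
  have h2 : Real.log (Real.sqrt x) = Real.log x / 2 := Real.log_sqrt hx0.le
  nlinarith

set_option maxHeartbeats 1000000 in
theorem statement13 (p : ℕ → ℝ)
    (hp : ∀ᶠ n : ℕ in atTop,
      (n : ℝ) ^ (-(1 : ℝ)/2) * Real.log n ^ ((10 : ℝ)/9) < p n ∧ p n < 1 / Real.log n)
    (c h : ℕ → ℝ)
    (hc : ∀ n, c n = n * p n)
    (hh : ∀ n, h n = 3 * Real.log (Real.log (c n)) / Real.log (c n))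
    (B : ℕ → ℕ)
    (hB : ∀ n, B n = ⌊(2 - h n) * ((n : ℝ) * Real.log (c n)) / c n⌋₊) :
    ∀ᶠ n : ℕ in atTop, ∀ ℓ : ℕ, 1 ≤ ℓ → ℓ ≤ B n →
      ((n - B n).descFactorial (B n - ℓ) : ℝ) / (n.descFactorial (B n) : ℝ) *
          p n ^ (-(ℓ : ℤ)) * (1 - p n) ^ ((ℓ : ℤ) - (ℓ.choose 2 : ℤ))
        < 6 ^ ℓ * c n ^ (-(ℓ : ℝ) +
            (1 + 1 / Real.log n) * c n * (ℓ.choose 2 : ℝ) / ((n : ℝ) * Real.log (c n))) := by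
  filter_upwards [hp, eventually_ge_atTop (360000 : ℕ)] with n hpn hn360
  obtain ⟨hplo, hphi⟩ := hpn
  set N : ℝ := (n : ℝ) with hNdef
  have hN360 : (360000 : ℝ) ≤ N := by rw [hNdef]; exact_mod_cast hn360
  have hN0 : (0 : ℝ) < N := by linarith
  have hexp2 : Real.exp 2 = Real.exp 1 * Real.exp 1 := by
    rw [← Real.exp_add]; norm_num
  have hexp1 : Real.exp 1 < 2.7182818286 := Real.exp_one_lt_d9
  have hexp1pos : (0 : ℝ) < Real.exp 1 := Real.exp_pos 1
  have hlogN2 : (2 : ℝ) ≤ Real.log N := by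
    have h1 : Real.exp 2 ≤ N := by nlinarith only [hexp2, hexp1, hexp1pos, hN360]
    calc (2 : ℝ) = Real.log (Real.exp 2) := (Real.log_exp 2).symm
      _ ≤ Real.log N := Real.log_le_log (Real.exp_pos 2) h1
  -- positivity of p
  have ha0 : (0 : ℝ) < N ^ (-(1 : ℝ)/2) := Real.rpow_pos_of_pos hN0 _
  have hb1 : (1 : ℝ) ≤ Real.log N ^ ((10 : ℝ)/9) := by
    calc (1 : ℝ) = Real.log N ^ (0 : ℝ) := (Real.rpow_zero _).symm
      _ ≤ Real.log N ^ ((10 : ℝ)/9) :=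
        Real.rpow_le_rpow_of_exponent_le (by linarith) (by norm_num)
  have hp0 : (0 : ℝ) < p n := lt_trans (by positivity) hplo
  have hδpos : (0 : ℝ) < 1 / Real.log N := by positivity
  have hδhalf : 1 / Real.log N ≤ 1/2 := by
    rw [div_le_div_iff₀ (by linarith) (by norm_num)]
    linarith only [hlogN2]
  have hphalf : p n ≤ 1/2 := le_trans hphi.le hδhalf
  have hCc : c n = N * p n := hc n
  have hCpos : (0 : ℝ) < c n := by rw [hCc]; positivity
  -- c ≥ 600
  have hNa : N ^ (1 : ℝ) * N ^ (-(1 : ℝ)/2) = N ^ ((1 : ℝ)/2) := by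
    rw [← Real.rpow_add hN0]; norm_num
  have hN1 : N ^ (1 : ℝ) = N := Real.rpow_one N
  have h600 : (600 : ℝ) ≤ N ^ ((1 : ℝ)/2) := by
    have h1 : ((600 : ℝ) ^ (2 : ℕ)) ^ ((1 : ℝ)/2) ≤ N ^ ((1 : ℝ)/2) :=
      Real.rpow_le_rpow (by positivity) (by norm_num; linarith) (by norm_num)
    have h2 : ((600 : ℝ) ^ (2 : ℕ)) ^ ((1 : ℝ)/2) = 600 := by
      rw [← Real.rpow_natCast 600 2, ← Real.rpow_mul (by norm_num)]; norm_num
    linarith [h2 ▸ h1]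
  have hCge : (600 : ℝ) ≤ c n := by
    have hs : N * (N ^ (-(1 : ℝ)/2) * Real.log N ^ ((10 : ℝ)/9)) ≥ 600 := by
      have heq : N * (N ^ (-(1 : ℝ)/2) * Real.log N ^ ((10 : ℝ)/9))
          = N ^ ((1 : ℝ)/2) * Real.log N ^ ((10 : ℝ)/9) := by
        rw [← hNa, hN1]; ring
      rw [heq]
      have hs0 : (0 : ℝ) < N ^ ((1 : ℝ)/2) := Real.rpow_pos_of_pos hN0 _
      have h3 := mul_le_mul_of_nonneg_left hb1 hs0.le
      rw [mul_one] at h3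
      linarith only [h3, h600]
    have h4 := mul_lt_mul_of_pos_left hplo hN0
    rw [hCc]; linarith only [h4, hs]
  have hlogC1 : (1 : ℝ) ≤ Real.log (c n) := by
    calc (1 : ℝ) = Real.log (Real.exp 1) := (Real.log_exp 1).symm
      _ ≤ Real.log (c n) := Real.log_le_log (Real.exp_pos 1) (by linarith only [hexp1, hCge])
  have hCleN : c n ≤ N := by
    have h1 := mul_le_mul_of_nonneg_left hphalf hN0.le
    rw [hCc]; linarith only [h1, hN0]
  have hlogCN : Real.log (c n) ≤ Real.log N := Real.log_le_log hCpos hCleN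
  -- bounds on B
  have hh0 : 0 ≤ h n := by
    rw [hh n]
    have : (0:ℝ) ≤ Real.log (Real.log (c n)) := Real.log_nonneg hlogC1
    positivity
  have hT0 : (0:ℝ) ≤ N * Real.log (c n) := mul_nonneg hN0.le (by linarith only [hlogC1])
  have hB2 : (B n : ℝ) ≤ 2 * (N * Real.log (c n)) / c n := by
    rw [hB n]
    apply floor_cast_le (by positivity)
    rw [div_le_div_iff_of_pos_right hCpos]
    linarith only [mul_nonneg hh0 hT0]
  have hBle : (B n : ℝ) * p n ≤ 2 * Real.log (c n) := by
    have h1 : 2 * (N * Real.log (c n)) / c n = 2 * Real.log (c n) / p n := by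
      rw [hCc, div_eq_div_iff (by positivity) (ne_of_gt hp0)]; ring
    have h2 : (B n : ℝ) ≤ 2 * Real.log (c n) / p n := by rw [← h1]; exact hB2
    calc (B n : ℝ) * p n ≤ (2 * Real.log (c n) / p n) * p n :=
          mul_le_mul_of_nonneg_right h2 hp0.le
      _ = 2 * Real.log (c n) := div_mul_cancel₀ _ (ne_of_gt hp0)
  have hlogCc12 : Real.log (c n) ≤ c n / 12 := log_le_div12 (by linarith only [hCge])
  have hBN6 : (B n : ℝ) ≤ N / 6 := by
    refine hB2.trans ?_
    rw [div_le_div_iff₀ hCpos (by norm_num)]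
    linarith only [mul_le_mul_of_nonneg_left hlogCc12 hN0.le]
  have hBn : B n ≤ n := by
    have : (B n : ℝ) ≤ N := by linarith only [hBN6, hN0]
    rw [hNdef] at this
    exact_mod_cast this
  have hMB : ((n - B n : ℕ) : ℝ) = N - (B n : ℝ) := by
    rw [hNdef]; push_cast [Nat.cast_sub hBn]; ring
  intro ℓ hℓ1 hℓB
  -- the Nat key inequality
  have key : (n - B n).descFactorial (B n - ℓ) * (n - B n) ^ ℓ ≤ n.descFactorial (B n) := by
    rw [← Nat.descFactorial_mul_descFactorial hℓB]
    refine Nat.mul_le_mul (Nat.descFactorial_le _ (by omega)) ?_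
    exact (Nat.pow_le_pow_left (by omega) ℓ).trans (Nat.pow_sub_le_descFactorial n ℓ)
  have hD2pos : 0 < n.descFactorial (B n) := by
    rcases Nat.eq_zero_or_pos (n.descFactorial (B n)) with h0 | h0
    · rw [Nat.descFactorial_eq_zero_iff_lt] at h0; omega
    · exact h0
  -- real abbreviations
  set P : ℝ := p n with hPdef
  set Cn : ℝ := c n with hCndef
  set L : ℝ := (ℓ : ℝ) with hLdef
  set k : ℕ := ℓ.choose 2 with hkdef
  set K : ℝ := (k : ℝ) with hKdef
  set M : ℝ := N - (B n : ℝ) with hMdef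
  set δ : ℝ := 1 / Real.log N with hδdef
  clear_value N P Cn L k K M δ
  have hL1 : (1 : ℝ) ≤ L := by rw [hLdef]; exact_mod_cast hℓ1
  have hL0 : (0 : ℝ) ≤ L := by linarith only [hL1]
  have hLB : L ≤ (B n : ℝ) := by rw [hLdef]; exact_mod_cast hℓB
  have hM56 : 5/6 * N ≤ M := by rw [hMdef]; linarith only [hBN6]
  have hMpos : (0 : ℝ) < M := by linarith only [hM56, hN0]
  have h1P : (0 : ℝ) < 1 - P := by linarith only [hphalf]
  have hD2pos' : (0 : ℝ) < (n.descFactorial (B n) : ℝ) := by exact_mod_cast hD2pos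
  have hPp : (0:ℝ) < P ^ ℓ := pow_pos hp0 ℓ
  have hMp : (0:ℝ) < M ^ ℓ := pow_pos hMpos ℓ
  have h1Pk : (0:ℝ) < (1 - P) ^ k := pow_pos h1P k
  have hCnp : (0:ℝ) < Cn ^ ℓ := pow_pos hCpos ℓ
  -- cast key
  have keyR : ((n - B n).descFactorial (B n - ℓ) : ℝ) * M ^ ℓ ≤ (n.descFactorial (B n) : ℝ) := by
    have h := (Nat.cast_le (α := ℝ)).mpr key
    push_cast at h
    rwa [hMB] at h
  have f1 : ((n - B n).descFactorial (B n - ℓ) : ℝ) / (n.descFactorial (B n) : ℝ)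
      ≤ 1 / M ^ ℓ := by
    rw [div_le_div_iff₀ hD2pos' hMp]
    linarith only [keyR]
  -- rewrite LHS
  have hLHSle : ((n - B n).descFactorial (B n - ℓ) : ℝ) / (n.descFactorial (B n) : ℝ) *
      P ^ (-(ℓ : ℤ)) * (1 - P) ^ ((ℓ : ℤ) - (k : ℤ))
      ≤ (1 / M ^ ℓ) * (1 / P ^ ℓ) * (1 / (1 - P) ^ k) := by
    have e1 : P ^ (-(ℓ : ℤ)) = 1 / P ^ ℓ := by
      rw [zpow_neg, zpow_natCast, one_div]
    have e2 : (1 - P) ^ ((ℓ : ℤ) - (k : ℤ)) = (1 - P) ^ ℓ / (1 - P) ^ k := by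
      rw [zpow_sub₀ (ne_of_gt h1P), zpow_natCast, zpow_natCast]
    rw [e1, e2]
    have h2 : (1 - P) ^ ℓ ≤ 1 := pow_le_one₀ (by linarith only [h1P]) (by linarith only [hp0])
    have b2 : (1 - P) ^ ℓ / (1 - P) ^ k ≤ 1 / (1 - P) ^ k :=
      (div_le_div_iff_of_pos_right h1Pk).mpr h2
    have hDnn : (0:ℝ) ≤ ((n - B n).descFactorial (B n - ℓ) : ℝ) / (n.descFactorial (B n) : ℝ) :=
      div_nonneg (Nat.cast_nonneg _) (Nat.cast_nonneg _)
    have b1 : ((n - B n).descFactorial (B n - ℓ) : ℝ) / (n.descFactorial (B n) : ℝ) *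
        (1 / P ^ ℓ) ≤ (1 / M ^ ℓ) * (1 / P ^ ℓ) :=
      mul_le_mul_of_nonneg_right f1 (by rw [one_div]; exact (inv_nonneg).mpr hPp.le)
    refine mul_le_mul b1 b2 (div_nonneg (pow_nonneg (by linarith only [h1P]) ℓ) h1Pk.le) ?_
    exact mul_nonneg (by rw [one_div]; exact (inv_nonneg).mpr hMp.le)
      (by rw [one_div]; exact (inv_nonneg).mpr hPp.le)
  -- lower bound pieces
  have g1 : Real.exp (-(P / (1 - P))) ≤ 1 - P := by
    have hlog : Real.log ((1 - P)⁻¹) ≤ (1 - P)⁻¹ - 1 :=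
      Real.log_le_sub_one_of_pos (by rw [inv_pos]; exact h1P)
    rw [Real.log_inv] at hlog
    have h2 : (1 - P)⁻¹ - 1 = P / (1 - P) := by field_simp; ring
    have h3 : -(P / (1 - P)) ≤ Real.log (1 - P) := by rw [← h2]; linarith only [hlog]
    calc Real.exp (-(P / (1 - P))) ≤ Real.exp (Real.log (1 - P)) := Real.exp_le_exp.mpr h3
      _ = 1 - P := Real.exp_log h1P
  have g2 : Real.exp (-(P / (1 - P)) * K) ≤ (1 - P) ^ k := by
    have e : -(P / (1 - P)) * K = (k : ℝ) * -(P / (1 - P)) := by rw [hKdef]; ring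
    rw [e, Real.exp_nat_mul]
    exact pow_le_pow_left₀ (Real.exp_nonneg _) g1 k
  have g3 : ((5:ℝ)/6 * Cn) ^ ℓ ≤ M ^ ℓ * P ^ ℓ := by
    rw [← mul_pow]
    refine pow_le_pow_left₀ (by linarith only [hCpos]) ?_ ℓ
    rw [hCc, hMdef]
    have h1 := mul_le_mul_of_nonneg_right
      (by linarith only [hBN6] : (5:ℝ)/6 * N ≤ N - (B n : ℝ)) hp0.le
    linarith only [h1]
  have hdenlb : ((5:ℝ)/6 * Cn) ^ ℓ * Real.exp (-(P / (1 - P)) * K)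
      ≤ M ^ ℓ * P ^ ℓ * (1 - P) ^ k :=
    mul_le_mul g3 g2 (Real.exp_nonneg _) (mul_pos hMp hPp).le
  have hstep2 : (1 / M ^ ℓ) * (1 / P ^ ℓ) * (1 / (1 - P) ^ k)
      ≤ (6/5 : ℝ) ^ ℓ * (1 / Cn ^ ℓ) * Real.exp ((P / (1 - P)) * K) := by
    have hA : (0:ℝ) < ((5:ℝ)/6 * Cn) ^ ℓ * Real.exp (-(P / (1 - P)) * K) :=
      mul_pos (pow_pos (by linarith only [hCpos]) ℓ) (Real.exp_pos _)
    have e3 : (1 / M ^ ℓ) * (1 / P ^ ℓ) * (1 / (1 - P) ^ k)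
        = 1 / (M ^ ℓ * P ^ ℓ * (1 - P) ^ k) := by
      rw [one_div, one_div, one_div, one_div, mul_inv, mul_inv]
    have e4 : 1 / (((5:ℝ)/6 * Cn) ^ ℓ * Real.exp (-(P / (1 - P)) * K))
        = (6/5 : ℝ) ^ ℓ * (1 / Cn ^ ℓ) * Real.exp ((P / (1 - P)) * K) := by
      rw [mul_pow, neg_mul, Real.exp_neg, one_div, mul_inv, mul_inv, inv_inv]
      have h56 : (((5:ℝ)/6) ^ ℓ)⁻¹ = ((6:ℝ)/5) ^ ℓ := by
        rw [← inv_pow]; norm_num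
      rw [h56, one_div]
    rw [e3, ← e4]
    exact one_div_le_one_div_of_le hA hdenlb
  -- exponent bound
  have hKval : K = L * (L - 1) / 2 := by
    rw [hKdef, hkdef, hLdef]; exact_mod_cast Nat.cast_choose_two (K := ℝ) ℓ
  have hK0 : (0:ℝ) ≤ K := by rw [hKdef]; positivity
  have hPL : P * L ≤ 2 * Real.log Cn := by
    have h1 : P * L ≤ P * (B n : ℝ) := mul_le_mul_of_nonneg_left hLB hp0.le
    linarith only [h1, hBle]
  have hPK : P * K ≤ Real.log N * L := by
    have hPL0 : (0:ℝ) ≤ P * L := mul_nonneg hp0.le hL0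
    have h1 : P * K ≤ (P * L) * L / 2 := by
      rw [hKval]; linarith only [hPL0]
    have h2 : (P * L) * L ≤ (2 * Real.log Cn) * L := mul_le_mul_of_nonneg_right hPL hL0
    have h3 : Real.log Cn * L ≤ Real.log N * L := mul_le_mul_of_nonneg_right hlogCN hL0
    linarith only [h1, h2, h3]
  have hδlogN : δ * Real.log N = 1 := by
    rw [hδdef, one_div, inv_mul_cancel₀ (by linarith only [hlogN2] : Real.log N ≠ 0)]
  have hPδ : P < δ := hphi
  have hfrac : P / (1 - P) ≤ P * (1 + δ + 2 * δ^2) := by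
    rw [div_le_iff₀ h1P]
    have hq : (0:ℝ) ≤ 1 + δ + 2 * δ^2 := by
      have := sq_nonneg δ
      linarith only [hδpos, this]
    have e2 : P * (1 + δ + 2 * δ^2) ≤ δ * (1 + δ + 2 * δ^2) :=
      mul_le_mul_of_nonneg_right hPδ.le hq
    have e5 : 0 ≤ δ^2 * (1 - 2*δ) := mul_nonneg (sq_nonneg δ) (by linarith only [hδhalf])
    have claim : 1 ≤ (1 + δ + 2 * δ^2) * (1 - P) := by nlinarith only [e2, e5]
    have e6 := mul_le_mul_of_nonneg_left claim hp0.le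
    rw [mul_one] at e6
    linarith only [e6]
  have hexpbd : (P / (1 - P)) * K ≤ (1 + δ) * P * K + L := by
    have h1 : (P / (1 - P)) * K ≤ (P * (1 + δ + 2 * δ^2)) * K :=
      mul_le_mul_of_nonneg_right hfrac hK0
    have h3 : 2 * δ^2 * (P * K) ≤ 2 * δ^2 * (Real.log N * L) :=
      mul_le_mul_of_nonneg_left hPK (by positivity)
    have h4 : 2 * δ^2 * (Real.log N * L) = 2 * δ * L * (δ * Real.log N) := by ring
    have h5 : 2 * δ * L * (δ * Real.log N) = 2 * δ * L := by rw [hδlogN]; ring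
    have h6 : 2 * δ * L ≤ L := by
      have := mul_le_mul_of_nonneg_right (by linarith only [hδhalf] : 2 * δ ≤ 1) hL0
      linarith only [this]
    nlinarith only [h1, h3, h4, h5, h6]
  -- rewrite RHS
  have hlogne : Real.log Cn ≠ 0 := ne_of_gt (by linarith only [hlogC1])
  have hRHSeq : (6:ℝ) ^ ℓ * Cn ^ (-L + (1 + δ) * Cn * K / (N * Real.log Cn))
      = 6 ^ ℓ * ((1 / Cn ^ ℓ) * Real.exp ((1 + δ) * P * K)) := by
    rw [Real.rpow_def_of_pos hCpos]
    have e5a : (1 + δ) * Cn * K / (N * Real.log Cn) = (1 + δ) * P * K / Real.log Cn := by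
      rw [div_eq_div_iff (mul_ne_zero (ne_of_gt hN0) hlogne) hlogne, hCc]; ring
    have e5 : Real.log Cn * (-L + (1 + δ) * Cn * K / (N * Real.log Cn))
        = -(L * Real.log Cn) + (1 + δ) * P * K := by
      rw [e5a]
      calc Real.log Cn * (-L + (1 + δ) * P * K / Real.log Cn)
          = -(L * Real.log Cn) + ((1 + δ) * P * K / Real.log Cn) * Real.log Cn := by ring
        _ = -(L * Real.log Cn) + (1 + δ) * P * K := by rw [div_mul_cancel₀ _ hlogne]
    rw [e5, Real.exp_add]
    have e6 : Real.exp (-(L * Real.log Cn)) = 1 / Cn ^ ℓ := by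
      rw [Real.exp_neg, hLdef, Real.exp_nat_mul, Real.exp_log hCpos, one_div]
    rw [e6]
  -- final chain
  have hfinal1 : (6/5 : ℝ) ^ ℓ * (1 / Cn ^ ℓ) * Real.exp ((P / (1 - P)) * K)
      ≤ ((6/5 : ℝ) * Real.exp 1) ^ ℓ * ((1 / Cn ^ ℓ) * Real.exp ((1 + δ) * P * K)) := by
    have h1 : Real.exp ((P / (1 - P)) * K) ≤ Real.exp ((1 + δ) * P * K + L) :=
      Real.exp_le_exp.mpr hexpbd
    have h2 : Real.exp ((1 + δ) * P * K + L) = Real.exp ((1 + δ) * P * K) * Real.exp 1 ^ ℓ := by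
      rw [Real.exp_add, hLdef, ← Real.exp_nat_mul, mul_one]
    have h3 : (0:ℝ) ≤ (6/5 : ℝ) ^ ℓ * (1 / Cn ^ ℓ) :=
      mul_nonneg (pow_nonneg (by norm_num) ℓ) (by rw [one_div]; exact inv_nonneg.mpr hCnp.le)
    calc (6/5 : ℝ) ^ ℓ * (1 / Cn ^ ℓ) * Real.exp ((P / (1 - P)) * K)
        ≤ (6/5 : ℝ) ^ ℓ * (1 / Cn ^ ℓ) * (Real.exp ((1 + δ) * P * K) * Real.exp 1 ^ ℓ) :=
          mul_le_mul_of_nonneg_left (h1.trans_eq h2) h3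
      _ = ((6/5 : ℝ) * Real.exp 1) ^ ℓ * ((1 / Cn ^ ℓ) * Real.exp ((1 + δ) * P * K)) := by
          rw [mul_pow]; ring
  have hfinal2 : ((6/5 : ℝ) * Real.exp 1) ^ ℓ * ((1 / Cn ^ ℓ) * Real.exp ((1 + δ) * P * K))
      < 6 ^ ℓ * ((1 / Cn ^ ℓ) * Real.exp ((1 + δ) * P * K)) := by
    have h1 : ((6/5 : ℝ) * Real.exp 1) ^ ℓ < 6 ^ ℓ := by
      refine pow_lt_pow_left₀ ?_ (by positivity) (by omega)
      linarith only [hexp1]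
    exact mul_lt_mul_of_pos_right h1
      (mul_pos (by rw [one_div]; exact inv_pos.mpr hCnp) (Real.exp_pos _))
  rw [hRHSeq]
  calc ((n - B n).descFactorial (B n - ℓ) : ℝ) / (n.descFactorial (B n) : ℝ) *
      P ^ (-(ℓ : ℤ)) * (1 - P) ^ ((ℓ : ℤ) - (k : ℤ))
      ≤ (1 / M ^ ℓ) * (1 / P ^ ℓ) * (1 / (1 - P) ^ k) := hLHSle
    _ ≤ (6/5 : ℝ) ^ ℓ * (1 / Cn ^ ℓ) * Real.exp ((P / (1 - P)) * K) := hstep2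
    _ ≤ ((6/5 : ℝ) * Real.exp 1) ^ ℓ * ((1 / Cn ^ ℓ) * Real.exp ((1 + δ) * P * K)) := hfinal1
    _ < 6 ^ ℓ * ((1 / Cn ^ ℓ) * Real.exp ((1 + δ) * P * K)) := hfinal2
end

section
/- Let p = p(n) satisfy n^{-1/2}(ln n)^{10/9} < p < 1/ln n, set c = np, h = 3·ln ln c/ln c, and b = ⌊(2−h)·(n·ln c)/c⌋. Then for all sufficiently large n and every integer ℓ with 1 ≤ ℓ ≤ b: ((n−b)_{b−ℓ}/(n)_{b}) · p^{−ℓ} · (1−p)^{ℓ − binom(ℓ,2)} < 6^{ℓ} · c^{−hℓ/2 + ℓ/ln n}. In particular this upper bound is of the form 6^{ℓ} · c^{−(1−o(1))·hℓ/2} uniformly in ℓ ≤ b. -/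
open Filter

lemma aux_nat (n b ℓ : ℕ) (h1 : ℓ ≤ b) :
    (n - b).descFactorial (b - ℓ) * (n - b) ^ ℓ ≤ n.descFactorial b := by
  calc (n - b).descFactorial (b - ℓ) * (n - b) ^ ℓ
      ≤ (n - ℓ).descFactorial (b - ℓ) * n.descFactorial ℓ :=
        Nat.mul_le_mul (Nat.descFactorial_le _ (by omega))
          (le_trans (Nat.pow_le_pow_left (by omega) ℓ) (Nat.pow_sub_le_descFactorial n ℓ))
    _ = n.descFactorial b := Nat.descFactorial_mul_descFactorial h1

lemma aux_log26 : Real.log 2 + 1 < Real.log 6 := by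
  have h6 : Real.log 6 = Real.log 2 + Real.log 3 := by
    rw [← Real.log_mul (by norm_num) (by norm_num)]; norm_num
  have h3 : (1:ℝ) < Real.log 3 := by
    rw [← Real.log_exp 1]
    apply Real.log_lt_log (Real.exp_pos 1)
    have := Real.exp_one_lt_d9
    linarith
  linarith

lemma aux_3logx {x : ℝ} (hx : 36 ≤ x) : 3 * Real.log x ≤ x := by
  have hx0 : (0:ℝ) ≤ x := by linarith
  have hs : (6:ℝ) ≤ Real.sqrt x := by
    have : Real.sqrt 36 ≤ Real.sqrt x := Real.sqrt_le_sqrt hx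
    rwa [show (36:ℝ) = 6^2 by norm_num, Real.sqrt_sq (by norm_num)] at this
  have hls : Real.log (Real.sqrt x) ≤ Real.sqrt x - 1 :=
    Real.log_le_sub_one_of_pos (by linarith)
  have hsq : Real.sqrt x * Real.sqrt x = x := Real.mul_self_sqrt hx0
  have : Real.log x = 2 * Real.log (Real.sqrt x) := by
    rw [Real.log_sqrt hx0]; ring
  nlinarith [hls, hsq, hs]

lemma aux_logc {x : ℝ} (hx : 256 ≤ x) : 8 * Real.log x ≤ x := by
  have hx0 : (0:ℝ) ≤ x := by linarith
  have hs : (16:ℝ) ≤ Real.sqrt x := by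
    have : Real.sqrt 256 ≤ Real.sqrt x := Real.sqrt_le_sqrt hx
    rwa [show (256:ℝ) = 16^2 by norm_num, Real.sqrt_sq (by norm_num)] at this
  have hls : Real.log (Real.sqrt x) ≤ Real.sqrt x - 1 :=
    Real.log_le_sub_one_of_pos (by linarith)
  have hsq : Real.sqrt x * Real.sqrt x = x := Real.mul_self_sqrt hx0
  have : Real.log x = 2 * Real.log (Real.sqrt x) := by
    rw [Real.log_sqrt hx0]; ring
  nlinarith [hls, hsq, hs]

set_option maxHeartbeats 2000000 in
theorem statement14 (p : ℕ → ℝ)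
    (hp : ∀ᶠ n : ℕ in atTop,
      (n : ℝ) ^ (-(1 : ℝ)/2) * Real.log n ^ ((10 : ℝ)/9) < p n ∧ p n < 1 / Real.log n)
    (c h : ℕ → ℝ)
    (hc : ∀ n, c n = n * p n)
    (hh : ∀ n, h n = 3 * Real.log (Real.log (c n)) / Real.log (c n))
    (B : ℕ → ℕ)
    (hB : ∀ n, B n = ⌊(2 - h n) * ((n : ℝ) * Real.log (c n)) / c n⌋₊) :
    ∀ᶠ n : ℕ in atTop, ∀ ℓ : ℕ, 1 ≤ ℓ → ℓ ≤ B n →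
      ((n - B n).descFactorial (B n - ℓ) : ℝ) / (n.descFactorial (B n) : ℝ) *
          p n ^ (-(ℓ : ℤ)) * (1 - p n) ^ ((ℓ : ℤ) - (ℓ.choose 2 : ℤ))
        < 6 ^ ℓ * c n ^ (-(h n) * ℓ / 2 + ℓ / Real.log n) := by
  have hlogtop : Tendsto (fun n : ℕ => Real.log n) atTop atTop :=
    Real.tendsto_log_atTop.comp tendsto_natCast_atTop_atTop
  filter_upwards [hp, hlogtop.eventually_ge_atTop 72, eventually_ge_atTop 2] with n hpn hLn72 hn2
  intro ℓ hℓ1 hℓB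
  set P := p n with hP
  set C := c n with hC
  set L := Real.log (c n) with hL
  set H := h n with hH
  set Ln := Real.log n with hLn
  obtain ⟨hplow, hpup⟩ := hpn
  -- basic facts
  have hn0 : (0:ℝ) < n := by
    have : (0:ℕ) < n := by omega
    exact_mod_cast this
  have hLn2 : (2:ℝ) ≤ Ln := by
    simpa [Ln] using le_trans (by norm_num) hLn72
  have hLn0 : (0:ℝ) < Ln := by linarith
  have hp0 : 0 < P := by
    refine lt_trans ?_ hplow
    positivity
  have hpLn : P < 1 / Ln := hpup
  have hphalf : P ≤ 1/2 := by
    have h1 : (1:ℝ)/Ln ≤ 1/2 := by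
      apply div_le_div_of_nonneg_left (by norm_num) (by norm_num) hLn2
    linarith
  have hp1 : P < 1 := by linarith
  have h1p : (0:ℝ) < 1 - P := by linarith
  have hc0 : 0 < C := by rw [hC, hc]; positivity
  have hcn : C ≤ (n:ℝ) := by
    rw [hC, hc]
    have := mul_le_mul_of_nonneg_left hp1.le hn0.le
    linarith
  -- c ≥ sqrt n, so log c ≥ 36
  have hsqrtc : (n:ℝ) ^ ((1:ℝ)/2) < C := by
    have h1 : (n:ℝ) ^ (-(1:ℝ)/2) ≤ (n:ℝ) ^ (-(1:ℝ)/2) * Ln ^ ((10:ℝ)/9) := by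
      refine le_mul_of_one_le_right (by positivity) ?_
      exact Real.one_le_rpow (by linarith) (by norm_num)
    have h2 : (n:ℝ) ^ (-(1:ℝ)/2) < P := lt_of_le_of_lt h1 hplow
    have h3 : (n:ℝ) * (n:ℝ) ^ (-(1:ℝ)/2) = (n:ℝ) ^ ((1:ℝ)/2) := by
      rw [show (n:ℝ) * (n:ℝ) ^ (-(1:ℝ)/2) = (n:ℝ) ^ (1:ℝ) * (n:ℝ) ^ (-(1:ℝ)/2) by
        rw [Real.rpow_one], ← Real.rpow_add hn0]
      norm_num
    rw [hC, hc, ← h3]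
    exact mul_lt_mul_of_pos_left h2 hn0
  have hL36 : (36:ℝ) ≤ L := by
    have h1 : Real.log ((n:ℝ) ^ ((1:ℝ)/2)) ≤ L := by
      rw [hL]
      exact (Real.log_le_log_iff (by positivity) hc0).mpr hsqrtc.le
    rw [Real.log_rpow hn0] at h1
    have : (1:ℝ)/2 * Ln ≥ 36 := by rw [hLn]; linarith [hLn72]
    linarith
  have hL0 : (0:ℝ) < L := by linarith
  have hLLn : L ≤ Ln := by
    rw [hL, hLn]
    exact (Real.log_le_log_iff hc0 hn0).mpr hcn
  have hC256 : (256:ℝ) ≤ C := by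
    have h2 : Real.log 256 < Real.log C := by
      have l2 : Real.log 256 = 8 * Real.log 2 := by
        rw [show (256:ℝ) = 2^8 by norm_num, Real.log_pow]
        norm_num
      have := Real.log_two_lt_d9
      rw [l2, ← hL]
      linarith
    exact le_of_lt ((Real.log_lt_log_iff (by norm_num) hc0).mp h2)
  have h8L : 8 * L ≤ C := by
    have := aux_logc hC256
    rwa [← hL] at this
  -- h bounds
  have hlogL0 : 0 ≤ Real.log L := Real.log_nonneg (by linarith)
  have hH0 : 0 ≤ H := by
    rw [hH, hh, ← hL]
    positivity
  have hH1 : H ≤ 1 := by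
    rw [hH, hh, ← hL, div_le_one hL0]
    exact aux_3logx hL36
  -- B bounds
  have hfloor : (B n : ℝ) ≤ (2 - H) * ((n:ℝ) * L) / C := by
    rw [hB]
    refine Nat.floor_le ?_
    have h2H : (0:ℝ) ≤ 2 - H := by linarith
    positivity
  have hBp : (B n : ℝ) * P ≤ (2 - H) * L := by
    have h1 : (B n : ℝ) * P ≤ (2 - H) * ((n:ℝ) * L) / C * P :=
      mul_le_mul_of_nonneg_right hfloor hp0.le
    have h2 : (2 - H) * ((n:ℝ) * L) / C * P = (2 - H) * L := by
      rw [hC, hc]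
      field_simp
      have hpn' : P * (p n)⁻¹ = 1 := mul_inv_cancel₀ hp0.ne'
      linear_combination (2 - H) * hpn'
    linarith [h1, h2.le]
  have hBp2 : (B n : ℝ) * P ≤ 2 * L := by
    have := mul_nonneg hH0 hL0.le
    linarith
  have hBpC : (B n : ℝ) * P ≤ C / 4 := by linarith
  have hBn : (B n : ℝ) ≤ (n:ℝ) / 2 := by
    refine le_trans hfloor ?_
    rw [div_le_div_iff₀ hc0 (by norm_num : (0:ℝ) < 2)]
    have k1 := mul_le_mul_of_nonneg_left h8L hn0.le
    have k2 := mul_nonneg (mul_nonneg hn0.le hL0.le) hH0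
    have k3 := mul_nonneg hn0.le hL0.le
    linarith
  have hBltn : B n < n := by
    have : (B n : ℝ) < (n:ℝ) := by linarith
    exact_mod_cast this
  have hcast : ((n - B n : ℕ) : ℝ) = (n:ℝ) - (B n : ℝ) := by
    exact_mod_cast Nat.cast_sub hBltn.le
  -- q
  set q : ℝ := ((n - B n : ℕ) : ℝ) * P with hqdef
  have hq : q = C - (B n : ℝ) * P := by
    rw [hqdef, hcast, hC, hc]; ring
  have hqge : C / 2 ≤ q := by rw [hq]; linarith
  have hq0 : (0:ℝ) < q := by linarith
  have hlogq : L - Real.log 2 ≤ Real.log q := by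
    have h1 : Real.log (C/2) ≤ Real.log q :=
      (Real.log_le_log_iff (by positivity) hq0).mpr hqge
    rw [Real.log_div hc0.ne' (by norm_num), ← hL] at h1
    linarith
  -- descFactorial ratio bound
  set K := ℓ.choose 2 with hKdef
  set D1 : ℝ := ((n - B n).descFactorial (B n - ℓ) : ℝ) with hD1
  set D2 : ℝ := (n.descFactorial (B n) : ℝ) with hD2
  have hD2pos : 0 < D2 := by
    rw [hD2]
    have : n.descFactorial (B n) ≠ 0 := by
      intro hz
      exact absurd (Nat.descFactorial_eq_zero_iff_lt.mp hz) (by omega)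
    exact_mod_cast Nat.pos_of_ne_zero this
  have hm0 : (0:ℝ) < ((n - B n : ℕ) : ℝ) := by
    have : 0 < n - B n := by omega
    exact_mod_cast this
  have hkey : D1 * ((n - B n : ℕ) : ℝ) ^ ℓ ≤ D2 := by
    rw [hD1, hD2]
    exact_mod_cast aux_nat n (B n) ℓ hℓB
  have hratio : D1 / D2 ≤ (((n - B n : ℕ) : ℝ) ^ ℓ)⁻¹ := by
    rw [div_le_iff₀ hD2pos, inv_mul_eq_div, le_div_iff₀ (by positivity)]
    exact hkey
  -- rewrite the zpow expressions
  have e1 : P ^ (-(ℓ:ℤ)) = (P ^ ℓ)⁻¹ := by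
    rw [zpow_neg, zpow_natCast]
  have e2 : (1 - P) ^ ((ℓ:ℤ) - (K:ℤ)) = (1 - P) ^ ℓ * ((1 - P) ^ K)⁻¹ := by
    rw [zpow_sub₀ h1p.ne', zpow_natCast, zpow_natCast, div_eq_mul_inv]
  have hA : D1 / D2 * (P ^ ℓ)⁻¹ ≤ (q⁻¹) ^ ℓ := by
    have hq2 : (q⁻¹) ^ ℓ = (((n - B n : ℕ) : ℝ) ^ ℓ)⁻¹ * (P ^ ℓ)⁻¹ := by
      rw [hqdef, ← mul_inv, ← mul_pow, inv_pow]
    rw [hq2]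
    exact mul_le_mul_of_nonneg_right hratio (by positivity)
  have hB2 : (1 - P) ^ ℓ * ((1 - P) ^ K)⁻¹ ≤ ((1 - P)⁻¹) ^ K := by
    rw [← inv_pow]
    exact mul_le_of_le_one_left (by positivity) (pow_le_one₀ h1p.le (by linarith))
  have hM : D1 / D2 * P ^ (-(ℓ:ℤ)) * (1 - P) ^ ((ℓ:ℤ) - (K:ℤ))
      ≤ (q⁻¹) ^ ℓ * ((1 - P)⁻¹) ^ K := by
    calc D1 / D2 * P ^ (-(ℓ:ℤ)) * (1 - P) ^ ((ℓ:ℤ) - (K:ℤ))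
        = (D1 / D2 * (P ^ ℓ)⁻¹) * ((1 - P) ^ ℓ * ((1 - P) ^ K)⁻¹) := by
          rw [e1, e2]
      _ ≤ (q⁻¹) ^ ℓ * ((1 - P)⁻¹) ^ K := by
          refine mul_le_mul hA hB2 (by positivity) (by positivity)
  refine lt_of_le_of_lt hM ?_
  -- now pure-real inequality, via logs
  have hM0 : (0:ℝ) < (q⁻¹) ^ ℓ * ((1 - P)⁻¹) ^ K := by positivity
  have hRHS0 : (0:ℝ) < 6 ^ ℓ * C ^ (-H * ℓ / 2 + ℓ / Ln) := by
    have := Real.rpow_pos_of_pos hc0 (-H * ℓ / 2 + ℓ / Ln)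
    positivity
  rw [← Real.log_lt_log_iff hM0 hRHS0]
  have hlogM : Real.log ((q⁻¹) ^ ℓ * ((1 - P)⁻¹) ^ K)
      = (ℓ:ℝ) * (-Real.log q) + (K:ℝ) * (-Real.log (1 - P)) := by
    rw [Real.log_mul (by positivity) (by positivity), Real.log_pow, Real.log_pow,
      Real.log_inv, Real.log_inv]
  have hlogR : Real.log (6 ^ ℓ * C ^ (-H * ℓ / 2 + ℓ / Ln))
      = (ℓ:ℝ) * Real.log 6 + (-H * ℓ / 2 + ℓ * Ln⁻¹) * L := by
    rw [Real.log_mul (by positivity) (Real.rpow_pos_of_pos hc0 _).ne',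
      Real.log_pow, Real.log_rpow hc0, ← hL]
    ring
  rw [hlogM, hlogR]
  -- numeric estimates
  have hl1 : (1:ℝ) ≤ (ℓ:ℝ) := by exact_mod_cast hℓ1
  have hlB : (ℓ:ℝ) ≤ (B n : ℝ) := by exact_mod_cast hℓB
  have f3 : -Real.log (1 - P) ≤ P + 2 * P^2 := by
    have h1 : Real.log (1 - P)⁻¹ ≤ (1 - P)⁻¹ - 1 :=
      Real.log_le_sub_one_of_pos (by positivity)
    rw [Real.log_inv] at h1
    have h2 : (1 - P)⁻¹ - 1 = P / (1 - P) := by field_simp; ring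
    have h3 : P / (1 - P) ≤ P + 2 * P^2 := by
      rw [div_le_iff₀ h1p]
      have hcube : 0 ≤ P^2 * (1 - 2*P) := mul_nonneg (by positivity) (by linarith)
      linarith [hcube]
    linarith
  have hKval : (K:ℝ) = (ℓ:ℝ) * ((ℓ:ℝ) - 1) / 2 := by
    rw [hKdef]
    exact Nat.cast_choose_two ℝ ℓ
  have hKle : (K:ℝ) ≤ (ℓ:ℝ) * (B n : ℝ) / 2 := by
    rw [hKval]
    have := mul_le_mul_of_nonneg_left (show (ℓ:ℝ) - 1 ≤ (B n : ℝ) by linarith)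
      (show (0:ℝ) ≤ (ℓ:ℝ) by linarith)
    linarith
  have hK0 : (0:ℝ) ≤ (K:ℝ) := by positivity
  have key1 : (K:ℝ) * (-Real.log (1 - P))
      ≤ (ℓ:ℝ)/2 * ((B n : ℝ) * P) + (ℓ:ℝ) * (((B n : ℝ) * P) * P) := by
    have s1 : (K:ℝ) * (-Real.log (1 - P)) ≤ (K:ℝ) * (P + 2 * P^2) :=
      mul_le_mul_of_nonneg_left f3 hK0
    have s2 : (K:ℝ) * (P + 2 * P^2) ≤ ((ℓ:ℝ) * (B n : ℝ) / 2) * (P + 2 * P^2) :=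
      mul_le_mul_of_nonneg_right hKle (by positivity)
    have s3 : ((ℓ:ℝ) * (B n : ℝ) / 2) * (P + 2 * P^2)
        = (ℓ:ℝ)/2 * ((B n : ℝ) * P) + (ℓ:ℝ) * (((B n : ℝ) * P) * P) := by ring
    linarith
  have key2 : (ℓ:ℝ)/2 * ((B n : ℝ) * P) ≤ (ℓ:ℝ)/2 * ((2 - H) * L) :=
    mul_le_mul_of_nonneg_left hBp (by positivity)
  have key3 : (ℓ:ℝ) * (((B n : ℝ) * P) * P) ≤ (ℓ:ℝ) * ((2 * L) * Ln⁻¹) := by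
    refine mul_le_mul_of_nonneg_left ?_ (by positivity)
    refine mul_le_mul hBp2 ?_ hp0.le (by positivity)
    rw [← one_div]
    exact hpLn.le
  have keyq : (ℓ:ℝ) * (-Real.log q) ≤ (ℓ:ℝ) * (Real.log 2 - L) :=
    mul_le_mul_of_nonneg_left (by linarith) (by positivity)
  have hfrac : (ℓ:ℝ) * (L * Ln⁻¹) ≤ (ℓ:ℝ) * 1 := by
    refine mul_le_mul_of_nonneg_left ?_ (by positivity)
    rw [← div_eq_mul_inv, div_le_one hLn0]
    exact hLLn
  have hstrict : (ℓ:ℝ) * (Real.log 2 + 1) < (ℓ:ℝ) * Real.log 6 :=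
    mul_lt_mul_of_pos_left aux_log26 (by linarith)
  linarith [key1, key2, key3, keyq, hfrac, hstrict]
end

section
/- There exists C > 0 such that for all real c > C and all real n ≥ c, setting h = 3·ln ln c/ln c, the inequality 1 − (1 + 1/ln n)·(1 − h/2)·c^{−t} − t > 1.001·(ln ln c)/ln c holds for every real t with 0 < t ≤ 1 − 1.01·(ln ln c)/ln c. -/
set_option maxHeartbeats 1000000

private lemma aux16 (l m u E t : ℝ) (hl : (100000000:ℝ) ≤ l) (hm : (20:ℝ) < m)
    (hml : m * 10000 ≤ 2 * l) (hu0 : 0 < u) (hu1 : u ≤ 1 / l)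
    (hEe : E = Real.exp (-(t * l))) (ht0 : 0 < t) (ht1 : t ≤ 1 - 1.01 * m / l) :
    1.001 * m / l < 1 - (1 + u) * (1 - 3 * m / l / 2) * E - t := by
  have hl0 : (0:ℝ) < l := by linarith
  have hE0 : 0 < E := by rw [hEe]; exact Real.exp_pos _
  have hinv : (1:ℝ)/l ≤ 0.00000001 := by
    rw [div_le_iff₀ hl0]; nlinarith
  have h3 : 3 * m / l / 2 ≤ 0.0003 := by
    rw [div_div, div_le_iff₀ (by positivity)]; nlinarith
  have h3pos : 0 ≤ 3 * m / l / 2 := by positivity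
  set a := (1 + u) * (1 - 3 * m / l / 2) with ha_def
  have ha_lb : (0.99:ℝ) ≤ a := by
    have h1 : (1:ℝ)*(1 - 3 * m / l / 2) ≤ (1+u)*(1 - 3 * m / l / 2) :=
      mul_le_mul_of_nonneg_right (by linarith) (by linarith)
    rw [one_mul] at h1; linarith [h1, h3]
  have ha_ub : a ≤ 1.1 := by
    have h1 : (1+u)*(1 - 3 * m / l / 2) ≤ (1+u)*1 :=
      mul_le_mul_of_nonneg_left (by linarith) (by linarith)
    rw [mul_one] at h1; linarith
  have ha0 : (0:ℝ) < a := by linarith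
  by_cases hcase : t ≤ 0.1
  · -- small t
    have h1 : t * l + 1 ≤ Real.exp (t*l) := Real.add_one_le_exp (t*l)
    have h2 : E * Real.exp (t*l) = 1 := by
      rw [hEe, ← Real.exp_add]; norm_num
    have hE1 : E * (1 + t*l) ≤ 1 := by
      have := mul_le_mul_of_nonneg_left (by linarith : 1 + t*l ≤ Real.exp (t*l)) hE0.le
      linarith
    have step1 : 1 + t * l ≤ a * l := by
      nlinarith [mul_le_mul_of_nonneg_right ha_lb hl0.le,
        mul_le_mul_of_nonneg_right hcase hl0.le]
    have step3 : a ≤ (a - t) * (1 + t * l) := by nlinarith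
    have hkey : a * E ≤ a - t := by
      have h4 : a * E * (1 + t*l) ≤ a * 1 := by
        have := mul_le_mul_of_nonneg_left hE1 ha0.le
        nlinarith
      have h5 : a * E * (1 + t*l) ≤ (a - t) * (1 + t*l) := by nlinarith
      have h6 : (0:ℝ) < 1 + t*l := by nlinarith
      exact le_of_mul_le_mul_right h5 h6
    have h6 : 1.001 * m / l + 1 / l < 3 * m / l / 2 := by
      rw [div_div, ← add_div, div_lt_div_iff₀ hl0 (by positivity)]
      nlinarith [mul_pos hl0 (show (0:ℝ) < 0.998*m - 2 by linarith)]
    have hfin : 1.001 * m / l < 1 - a := by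
      rw [ha_def]
      nlinarith [h6, hu1, mul_nonneg hu0.le h3pos]
    linarith
  · -- large t
    push_neg at hcase
    have h01 : E ≤ Real.exp (-(0.1*l)) := by
      rw [hEe]
      exact Real.exp_le_exp.mpr (by nlinarith)
    have hqd : (0.05*l)^2 ≤ Real.exp (0.1*l) := by
      have h1 := Real.add_one_le_exp (0.05*l)
      have h2 : Real.exp (0.1*l) = Real.exp (0.05*l) * Real.exp (0.05*l) := by
        rw [← Real.exp_add]; ring_nf
      nlinarith
    have hE2 : E * (0.05*l)^2 ≤ 1 := by
      have h3 : Real.exp (-(0.1*l)) * Real.exp (0.1*l) = 1 := by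
        rw [← Real.exp_add]; norm_num
      nlinarith [Real.exp_pos (-(0.1*l)), Real.exp_pos (0.1*l),
        mul_le_mul h01 hqd (by positivity) (Real.exp_pos _).le]
    have hz : E * l * l ≤ 400 := by nlinarith
    have hE4 : E * l ≤ 0.000004 := by
      nlinarith [mul_le_mul_of_nonneg_left hl (mul_pos hE0 hl0).le]
    have haE : a * E * l ≤ 0.0000044 := by
      nlinarith [mul_pos hE0 hl0]
    have htl : t * l ≤ l - 1.01 * m := by
      have h := mul_le_mul_of_nonneg_right ht1 hl0.le
      have h2 : (1 - 1.01 * m / l) * l = l - 1.01 * m := by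
        field_simp
      linarith
    rw [div_lt_iff₀ hl0]
    nlinarith [htl, haE, hm]

theorem statement16 : ∃ C : ℝ, 0 < C ∧
    ∀ c : ℝ, C < c → ∀ n : ℝ, c ≤ n →
      ∀ t : ℝ, 0 < t → t ≤ 1 - 1.01 * Real.log (Real.log c) / Real.log c →
        1.001 * Real.log (Real.log c) / Real.log c <
          1 - (1 + 1 / Real.log n) * (1 - (3 * Real.log (Real.log c) / Real.log c) / 2) *
              c ^ (-t) - t := by
  refine ⟨Real.exp (Real.exp 20), Real.exp_pos _, ?_⟩
  intro c hc n hn t ht0 ht1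
  have hc1 : (1:ℝ) < c := by
    have h1 := Real.add_one_le_exp (Real.exp 20)
    have h2 := Real.exp_pos (20:ℝ)
    linarith
  have hc0 : (0:ℝ) < c := by linarith
  have hl20e : Real.exp 20 < Real.log c := by
    have := Real.log_lt_log (Real.exp_pos _) hc
    rwa [Real.log_exp] at this
  have h20 : (100000000:ℝ) ≤ Real.exp 20 := by
    have h1 : (2.7182818283:ℝ) ≤ Real.exp 1 := Real.exp_one_gt_d9.le
    have h2 : Real.exp 1 ^ (20:ℕ) = Real.exp 20 := by
      rw [← Real.exp_nat_mul]; norm_num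
    have h3 : (2.7:ℝ)^(20:ℕ) ≤ Real.exp 1 ^ (20:ℕ) :=
      pow_le_pow_left₀ (by norm_num) (by linarith) 20
    have h4 : (100000000:ℝ) ≤ (2.7:ℝ)^(20:ℕ) := by norm_num
    linarith
  have hl : (100000000:ℝ) ≤ Real.log c := by linarith
  have hl0 : (0:ℝ) < Real.log c := by linarith
  have hm : (20:ℝ) < Real.log (Real.log c) := by
    have := Real.log_lt_log (Real.exp_pos 20) hl20e
    rwa [Real.log_exp] at this
  have hsq : Real.sqrt (Real.log c) ^ 2 = Real.log c := Real.sq_sqrt hl0.le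
  have hs0 : 0 ≤ Real.sqrt (Real.log c) := Real.sqrt_nonneg _
  have hs : (10000:ℝ) ≤ Real.sqrt (Real.log c) := by
    nlinarith [sq_nonneg (Real.sqrt (Real.log c) - 10000)]
  have hms : Real.log (Real.log c) ≤ 2 * Real.sqrt (Real.log c) := by
    have h1 : Real.log (Real.sqrt (Real.log c)) ≤ Real.sqrt (Real.log c) - 1 :=
      Real.log_le_sub_one_of_pos (by positivity)
    have h2 : Real.log (Real.sqrt (Real.log c)) = Real.log (Real.log c) / 2 :=
      Real.log_sqrt hl0.le
    rw [h2] at h1; linarith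
  have hml : Real.log (Real.log c) * 10000 ≤ 2 * Real.log c := by nlinarith
  have hn1 : (1:ℝ) < n := lt_of_lt_of_le hc1 hn
  have hln : Real.log c ≤ Real.log n := Real.log_le_log hc0 hn
  have hn0 : (0:ℝ) < Real.log n := lt_of_lt_of_le hl0 hln
  have hu0 : 0 < 1 / Real.log n := by positivity
  have hu1 : 1 / Real.log n ≤ 1 / Real.log c := one_div_le_one_div_of_le hl0 hln
  have hEexp : c ^ (-t) = Real.exp (-(t * Real.log c)) := by
    rw [Real.rpow_def_of_pos hc0]; ring_nf
  have := aux16 (Real.log c) (Real.log (Real.log c)) (1 / Real.log n) (c ^ (-t)) t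
    hl hm hml hu0 hu1 hEexp ht0 ht1
  linarith [this]
end
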